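/- arXiv:1811.03128 — 14 statements merged into one kernel-verified Lean document; each statement's English description precedes it below -/
import Mathlib

section
/- Let A, B be positive elements and X an element of a unital C*-algebra. Then the 2×2 operator matrix [[A, X], [X*, B]] is positive if and only if for every ε > 0 one has B ≥ X*(A + εI)⁻¹X. -/
open scoped Matrix ComplexOrder
set_option linter.unusedSectionVars false
set_option linter.unnecessarySimpa false

namespace M2Build

variable {𝒜 : Type*} [CStarAlgebra 𝒜] [PartialOrder 𝒜] [StarOrderedRing 𝒜] {n : ℕ}

def M2 (𝒜 : Type*) (n : ℕ) : Type _ := Matrix (Fin n) (Fin n) 𝒜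

namespace M2


noncomputable instance instCStarAlgebra : CStarAlgebra (M2 𝒜 n) :=
  inferInstanceAs (CStarAlgebra (CStarMatrix (Fin n) (Fin n) 𝒜))

/-- interpret a matrix as an element of `M2` -/
def ofMatrix (M : Matrix (Fin n) (Fin n) 𝒜) : M2 𝒜 n := M

lemma ofMatrix_mul (M N : Matrix (Fin n) (Fin n) 𝒜) :
    ofMatrix (M * N) = ofMatrix M * ofMatrix N := rfl

lemma ofMatrix_star (M : Matrix (Fin n) (Fin n) 𝒜) : ofMatrix Mᴴ = star (ofMatrix M) := rfl

lemma mul_entry (M N : M2 𝒜 n) (i j : Fin n) : (M * N) i j = ∑ k, M i k * N k j :=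
  Matrix.mul_apply

lemma one_entry (i j : Fin n) : (1 : M2 𝒜 n) i j = if i = j then 1 else 0 :=
  Matrix.one_apply

lemma add_entry (M N : M2 𝒜 n) (i j : Fin n) : (M + N) i j = M i j + N i j := rfl
lemma sub_entry (M N : M2 𝒜 n) (i j : Fin n) : (M - N) i j = M i j - N i j := rfl
lemma zero_entry (i j : Fin n) : (0 : M2 𝒜 n) i j = 0 := rfl
lemma star_entry (M : M2 𝒜 n) (i j : Fin n) : (star M) i j = star (M j i) := rfl
lemma smul_entry (c : ℂ) (M : M2 𝒜 n) (i j : Fin n) : (c • M) i j = c • M i j := rfl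

lemma algebraMap_entry (c : ℂ) (i j : Fin n) :
    (algebraMap ℂ (M2 𝒜 n) c) i j = if i = j then algebraMap ℂ 𝒜 c else 0 :=
  Matrix.algebraMap_matrix_apply

lemma ext' {M N : M2 𝒜 n} (h : ∀ i j, M i j = N i j) : M = N := Matrix.ext h

lemma norm_le_sum_aux (M : CStarMatrix (Fin n) (Fin n) 𝒜) :
    ‖CStarMatrix.toCLM M‖ ≤ ∑ i, ∑ j, ‖M i j‖ := by
  refine (CStarMatrix.toCLM M).opNorm_le_bound
    (Finset.sum_nonneg fun _ _ => Finset.sum_nonneg fun _ _ => norm_nonneg _) fun v => ?_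
  rw [CStarMatrix.toCLM_apply_eq_sum]
  calc _ ≤ ∑ j, ‖(∑ i, v i * M i j)‖ := by
          refine (WithCStarModule.pi_norm_le_sum_norm _).trans (le_of_eq ?_)
          rfl
    _ ≤ ∑ j, ∑ i, ‖M i j‖ * ‖v‖ := by
          refine Finset.sum_le_sum fun j _ =>
            (norm_sum_le _ _).trans (Finset.sum_le_sum fun i _ => ?_)
          refine (norm_mul_le _ _).trans ?_
          rw [mul_comm]
          gcongr
          exact WithCStarModule.norm_apply_le_norm v i
    _ = (∑ i, ∑ j, ‖M i j‖) * ‖v‖ := by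
          rw [Finset.sum_comm, Finset.sum_mul]
          exact Finset.sum_congr rfl fun i _ => (Finset.sum_mul ..).symm

lemma norm_le_sum (M : M2 𝒜 n) : ‖M‖ ≤ ∑ i, ∑ j, ‖M i j‖ := by
  have key : ∀ M : CStarMatrix (Fin n) (Fin n) 𝒜, ‖M‖ ≤ ∑ i, ∑ j, ‖M i j‖ := by
    intro M
    rw [CStarMatrix.norm_def]
    exact norm_le_sum_aux M
  exact key M

end M2
end M2Build

-- ============ Bridge between `MatPos`-style positivity and the C*-order on `M2` ============

section Bridge

variable {𝒜 : Type*} [CStarAlgebra 𝒜] [PartialOrder 𝒜] [StarOrderedRing 𝒜] {n : ℕ}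

open M2Build M2Build.M2

lemma matPos_limit (M N : Matrix (Fin n) (Fin n) 𝒜)
    (h : ∀ ε : ℝ, 0 < ε → ∃ C : Matrix (Fin n) (Fin n) 𝒜, M + ε • N = Cᴴ * C) :
    ∃ C : Matrix (Fin n) (Fin n) 𝒜, M = Cᴴ * C := by
  letI instOrd : PartialOrder (M2Build.M2 𝒜 n) := CStarAlgebra.spectralOrder (M2Build.M2 𝒜 n)
  haveI : StarOrderedRing (M2Build.M2 𝒜 n) := CStarAlgebra.spectralOrderedRing (M2Build.M2 𝒜 n)
  have key : ∀ P : Matrix (Fin n) (Fin n) 𝒜,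
      (∃ C : Matrix (Fin n) (Fin n) 𝒜, P = Cᴴ * C) ↔ 0 ≤ ofMatrix P := by
    intro P
    constructor
    · rintro ⟨C, rfl⟩
      have : ofMatrix (Cᴴ * C) = star (ofMatrix C) * ofMatrix C := rfl
      rw [this]
      exact star_mul_self_nonneg _
    · intro hP
      set s : M2Build.M2 𝒜 n := CFC.sqrt (ofMatrix P) with hs_def
      have hs_nonneg : 0 ≤ s := CFC.sqrt_nonneg _
      have hs_sa : star s = s := (IsSelfAdjoint.of_nonneg hs_nonneg)
      have hs_sq : s * s = ofMatrix P := CFC.sqrt_mul_sqrt_self _ hP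
      refine ⟨(s : Matrix (Fin n) (Fin n) 𝒜), ?_⟩
      show ofMatrix P = star s * s
      rw [hs_sa, hs_sq]
  rw [key]
  -- the sequence `M + (1/(m+1)) • N` converges to `M` in `M2`
  have htends : Filter.Tendsto (fun m : ℕ => ofMatrix (M + (1 / (m + 1) : ℝ) • N))
      Filter.atTop (nhds (ofMatrix M)) := by
    rw [tendsto_iff_norm_sub_tendsto_zero]
    have hbound : ∀ m : ℕ, ‖ofMatrix (M + (1 / (m + 1) : ℝ) • N) - ofMatrix M‖
        ≤ (1 / (m + 1) : ℝ) * ∑ i : Fin n, ∑ j : Fin n, ‖N i j‖ := by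
      intro m
      have h1 : ofMatrix (M + (1 / (m + 1) : ℝ) • N) - ofMatrix M
          = ofMatrix ((1 / (m + 1) : ℝ) • N) := by
        show (M + (1 / (m + 1) : ℝ) • N) - M = (1 / (m + 1) : ℝ) • N
        abel
      rw [h1]
      refine (norm_le_sum _).trans ?_
      rw [Finset.mul_sum]
      refine Finset.sum_le_sum fun i _ => ?_
      rw [Finset.mul_sum]
      refine Finset.sum_le_sum fun j _ => ?_
      have : (ofMatrix ((1 / (m + 1) : ℝ) • N)) i j = (1 / (m + 1) : ℝ) • N i j := rfl
      rw [this, norm_smul, Real.norm_eq_abs,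
        abs_of_pos (by positivity : (0:ℝ) < (1 / (m + 1) : ℝ))]
    have hzero : Filter.Tendsto
        (fun m : ℕ => (1 / (m + 1) : ℝ) * ∑ i : Fin n, ∑ j : Fin n, ‖N i j‖)
        Filter.atTop (nhds 0) := by
      have := tendsto_one_div_add_atTop_nhds_zero_nat.mul_const
        (∑ i : Fin n, ∑ j : Fin n, ‖N i j‖)
      simpa using this
    exact squeeze_zero (fun m => norm_nonneg _) hbound hzero
  have hmem : ∀ m : ℕ, ofMatrix (M + (1 / (m + 1) : ℝ) • N) ∈ {a : M2Build.M2 𝒜 n | 0 ≤ a} := by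
    intro m
    have hpos : (0:ℝ) < 1 / (m + 1) := by positivity
    exact (key _).mp (h _ hpos)
  exact CStarAlgebra.isClosed_nonneg.mem_of_tendsto htends (Filter.Eventually.of_forall hmem)

end Bridge

/-- `M` is a positive element of the C*-algebra `Mₙ(𝒜)`:
`M = Bᴴ * B` for some matrix `B` over `𝒜`. -/
def MatPos {𝒜 : Type*} [CStarAlgebra 𝒜] {n : ℕ} (M : Matrix (Fin n) (Fin n) 𝒜) : Prop :=
  ∃ B : Matrix (Fin n) (Fin n) 𝒜, M = Bᴴ * B

set_option maxHeartbeats 1000000 in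
theorem stmt_1 {𝒜 : Type*} [CStarAlgebra 𝒜] [PartialOrder 𝒜] [StarOrderedRing 𝒜]
    (A B X : 𝒜) (hA : 0 ≤ A) (hB : 0 ≤ B) :
    MatPos !![A, X; star X, B] ↔
      ∀ ε : ℝ, 0 < ε → star X * Ring.inverse (A + ε • (1 : 𝒜)) * X ≤ B := by
  constructor
  · rintro ⟨C, hC⟩ ε hε
    -- notation for the entries of C
    set c := C 0 0 with hc
    set d := C 0 1 with hd
    set e := C 1 0 with he
    set f := C 1 1 with hf
    -- entry equations
    have h00 := congrFun (congrFun hC 0) 0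
    have h01 := congrFun (congrFun hC 0) 1
    have h11 := congrFun (congrFun hC 1) 1
    simp [Matrix.mul_apply, Fin.sum_univ_two, Matrix.conjTranspose_apply] at h00 h01 h11
    -- h00 : A = star c * c + star e * e, etc.
    have quad : ∀ a b : 𝒜, 0 ≤ star a * A * a + star a * X * b + star b * star X * a
        + star b * B * b := by
      intro a b
      have h1 : 0 ≤ star (c * a + d * b) * (c * a + d * b) := star_mul_self_nonneg _
      have h2 : 0 ≤ star (e * a + f * b) * (e * a + f * b) := star_mul_self_nonneg _
      have hkey : star a * A * a + star a * X * b + star b * star X * a + star b * B * b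
          = star (c * a + d * b) * (c * a + d * b) + star (e * a + f * b) * (e * a + f * b) := by
        rw [h00, h01, h11]
        simp only [star_add, star_mul, star_star]
        noncomm_ring
      rw [hkey]
      exact add_nonneg h1 h2
    -- invertibility of A + ε • 1
    have hone : IsUnit (ε • (1 : 𝒜)) := by
      rw [← Algebra.algebraMap_eq_smul_one]
      exact (isUnit_iff_ne_zero.2 hε.ne').map (algebraMap ℝ 𝒜)
    have hone' : (0 : 𝒜) ≤ ε • (1 : 𝒜) := smul_nonneg hε.le zero_le_one
    have hu : IsUnit (A + ε • (1 : 𝒜)) :=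
      CStarAlgebra.isUnit_of_le _ (le_add_of_nonneg_left hA) (hone.isStrictlyPositive hone')
    set R := Ring.inverse (A + ε • (1 : 𝒜)) with hR
    have hR2 : R * (A + ε • (1 : 𝒜)) = 1 := Ring.inverse_mul_cancel _ hu
    have hRA : R * A = 1 - ε • R := by
      have h' : R * (A + ε • (1 : 𝒜)) = R * A + ε • R := by
        rw [mul_add, mul_smul_comm, mul_one]
      rw [h'] at hR2
      rw [eq_sub_iff_add_eq, hR2]
    have h1sa : IsSelfAdjoint (ε • (1 : 𝒜)) := by
      simp [IsSelfAdjoint, star_smul]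
    have hsa : IsSelfAdjoint (A + ε • (1 : 𝒜)) :=
      (IsSelfAdjoint.of_nonneg hA).add h1sa
    have hRs : star R = R := by
      rw [hR, ← Ring.inverse_star, hsa.star_eq]
    -- apply `quad` with a := -(R * X), b := 1
    have hq := quad (-(R * X)) 1
    simp only [mul_one, one_mul, star_one] at hq
    have hstar_a : star (-(R * X)) = -(star X * R) := by
      rw [star_neg, star_mul, hRs]
    have id1 : star (-(R * X)) * A * (-(R * X))
        = star X * R * X - ε • (star (R * X) * (R * X)) := by
      rw [hstar_a]
      calc -(star X * R) * A * -(R * X) = star X * ((R * A) * (R * X)) := by noncomm_ring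
        _ = star X * ((1 - ε • R) * (R * X)) := by rw [hRA]
        _ = star X * (R * X) - ε • (star X * (R * (R * X))) := by
            rw [sub_mul, one_mul, smul_mul_assoc, mul_sub, mul_smul_comm]
        _ = star X * R * X - ε • (star (R * X) * (R * X)) := by
            rw [star_mul, hRs]
            noncomm_ring
    have id2 : B - star X * R * X
        = (star (-(R * X)) * A * (-(R * X)) + star (-(R * X)) * X + star X * (-(R * X)) + B)
          + ε • (star (R * X) * (R * X)) := by
      rw [id1, hstar_a]
      have e1 : -(star X * R) * X = -(star X * R * X) := by noncomm_ring
      have e2 : star X * -(R * X) = -(star X * R * X) := by noncomm_ring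
      rw [e1, e2]
      abel
    have hsum : 0 ≤ B - star X * R * X := by
      rw [id2]
      exact add_nonneg hq (smul_nonneg hε.le (star_mul_self_nonneg _))
    exact sub_nonneg.mp hsum
  · intro h
    refine matPos_limit !![A, X; star X, B] !![(1:𝒜), 0; 0, 0] ?_
    intro ε hε
    -- invertibility facts
    have hone : IsUnit (ε • (1 : 𝒜)) := by
      rw [← Algebra.algebraMap_eq_smul_one]
      exact (isUnit_iff_ne_zero.2 hε.ne').map (algebraMap ℝ 𝒜)
    have hone' : (0 : 𝒜) ≤ ε • (1 : 𝒜) := smul_nonneg hε.le zero_le_one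
    have hAe : (0 : 𝒜) ≤ A + ε • (1 : 𝒜) := add_nonneg hA hone'
    have hu : IsUnit (A + ε • (1 : 𝒜)) :=
      CStarAlgebra.isUnit_of_le _ (le_add_of_nonneg_left hA) (hone.isStrictlyPositive hone')
    set R := Ring.inverse (A + ε • (1 : 𝒜)) with hRdef
    have hR1 : (A + ε • (1 : 𝒜)) * R = 1 := Ring.mul_inverse_cancel _ hu
    have hR2 : R * (A + ε • (1 : 𝒜)) = 1 := Ring.inverse_mul_cancel _ hu
    -- square root of A + ε 1
    set s := CFC.sqrt (A + ε • (1 : 𝒜)) with hsdef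
    have hs_nonneg : (0 : 𝒜) ≤ s := CFC.sqrt_nonneg _
    have hs_sa : star s = s := (IsSelfAdjoint.of_nonneg hs_nonneg)
    have hs_sq : s * s = A + ε • (1 : 𝒜) := CFC.sqrt_mul_sqrt_self _ hAe
    have hRs_comm : R * s = s * R := by
      calc R * s = R * s * ((A + ε • (1 : 𝒜)) * R) := by rw [hR1, mul_one]
        _ = R * (s * (s * s)) * R := by rw [← hs_sq]; noncomm_ring
        _ = R * ((s * s) * s) * R := by noncomm_ring
        _ = (R * (A + ε • (1 : 𝒜))) * (s * R) := by rw [← hs_sq]; noncomm_ring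
        _ = s * R := by rw [hR2, one_mul]
    have hsu : IsUnit s := by
      refine ⟨⟨s, s * R, ?_, ?_⟩, rfl⟩
      · calc s * (s * R) = (s * s) * R := by rw [mul_assoc]
          _ = 1 := by rw [hs_sq, hR1]
      · calc (s * R) * s = s * (R * s) := by rw [mul_assoc]
          _ = (s * s) * R := by rw [hRs_comm, mul_assoc]
          _ = 1 := by rw [hs_sq, hR1]
    set t := Ring.inverse s with htdef
    have hst : s * t = 1 := Ring.mul_inverse_cancel _ hsu
    have hts : t * s = 1 := Ring.inverse_mul_cancel _ hsu
    have hts_sa : star t = t := by rw [htdef, ← Ring.inverse_star, hs_sa]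
    have htt : t * t = R := by
      calc t * t = t * t * ((A + ε • (1 : 𝒜)) * R) := by rw [hR1, mul_one]
        _ = t * (t * (s * s)) * R := by rw [← hs_sq]; noncomm_ring
        _ = t * ((t * s) * s) * R := by noncomm_ring
        _ = R := by rw [hts, one_mul, hts, one_mul]
    -- square root of B - star X * R * X
    have hD : (0 : 𝒜) ≤ B - star X * R * X := sub_nonneg.2 (h ε hε)
    set g := CFC.sqrt (B - star X * R * X) with hgdef
    have hg_nonneg : (0 : 𝒜) ≤ g := CFC.sqrt_nonneg _
    have hg_sa : star g = g := (IsSelfAdjoint.of_nonneg hg_nonneg)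
    have hg_sq : g * g = B - star X * R * X := CFC.sqrt_mul_sqrt_self _ hD
    refine ⟨!![s, t * X; 0, g], ?_⟩
    ext i j
    fin_cases i <;> fin_cases j <;>
      simp [Matrix.mul_apply, Fin.sum_univ_two]
    · -- (0,0)
      rw [hs_sa, hs_sq]
    · -- (0,1)
      rw [hs_sa, ← mul_assoc, hst, one_mul]
    · -- (1,0)
      rw [hts_sa, mul_assoc, hts, mul_one]
    · -- (1,1)
      rw [hts_sa, hg_sa, hg_sq,
        show star X * t * (t * X) = star X * (t * t) * X from by noncomm_ring, htt]
      abel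
end

section
/- Let X and Y be positive elements of a unital C*-algebra. Then X ≥ Y if and only if the 2×2 operator matrix [[X, Y], [Y, Y]] is positive. -/
open scoped Matrix ComplexOrder

theorem stmt_2 {𝒜 : Type*} [CStarAlgebra 𝒜] [PartialOrder 𝒜] [StarOrderedRing 𝒜]
    (X Y : 𝒜) (hX : 0 ≤ X) (hY : 0 ≤ Y) :
    Y ≤ X ↔ MatPos !![X, Y; Y, Y] := by
  constructor
  · intro hle
    have hXY : (0 : 𝒜) ≤ X - Y := sub_nonneg.mpr hle
    set d := CFC.sqrt (X - Y) with hd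
    set e := CFC.sqrt Y with he
    have hdd : d * d = X - Y := CFC.sqrt_mul_sqrt_self _ hXY
    have hee : e * e = Y := CFC.sqrt_mul_sqrt_self _ hY
    have hds : star d = d := (IsSelfAdjoint.of_nonneg (CFC.sqrt_nonneg _)).star_eq
    have hes : star e = e := (IsSelfAdjoint.of_nonneg (CFC.sqrt_nonneg _)).star_eq
    refine ⟨!![d, 0; e, e], ?_⟩
    ext i j
    fin_cases i <;> fin_cases j <;>
      simp [Matrix.mul_apply, Fin.sum_univ_two, hds, hes, hdd, hee]
  · rintro ⟨B, hB⟩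
    have key : X - Y = ∑ k : Fin 2, star (B k 0 - B k 1) * (B k 0 - B k 1) := by
      have h00 : X = ∑ k : Fin 2, star (B k 0) * B k 0 := by
        have := congrFun (congrFun hB 0) 0
        simpa [Matrix.mul_apply] using this
      have h01 : Y = ∑ k : Fin 2, star (B k 0) * B k 1 := by
        have := congrFun (congrFun hB 0) 1
        simpa [Matrix.mul_apply] using this
      have h10 : Y = ∑ k : Fin 2, star (B k 1) * B k 0 := by
        have := congrFun (congrFun hB 1) 0
        simpa [Matrix.mul_apply] using this
      have h11 : Y = ∑ k : Fin 2, star (B k 1) * B k 1 := by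
        have := congrFun (congrFun hB 1) 1
        simpa [Matrix.mul_apply] using this
      rw [Fin.sum_univ_two] at h00 h01 h10 h11 ⊢
      simp only [star_sub]
      linear_combination (norm := noncomm_ring) h00 - h01 - h10 + h11
    have : (0:𝒜) ≤ X - Y := by
      rw [key]
      exact Finset.sum_nonneg fun k _ => star_mul_self_nonneg _
    exact sub_nonneg.mp this
end

section
/- (Choi's inequality for Lieb maps, part a) Let Φ: 𝒜 → ℬ be a Lieb map between unital C*-algebras with Φ(I) > 0. Then Φ(A*A) ≥ Φ(A)* Φ(I)⁻¹ Φ(A) for every A ∈ 𝒜. In particular, if 0 < Φ(I) ≤ I, then Φ(A*A) ≥ Φ(A)*Φ(A). -/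
open scoped Matrix ComplexOrder

lemma matpos_key {ℬ : Type*} [CStarAlgebra ℬ] [PartialOrder ℬ] [StarOrderedRing ℬ]
    {a b d : ℬ} (h : MatPos !![a, b; star b, d]) (z : ℬ) :
    0 ≤ d - star b * z - star z * b + star z * a * z := by
  obtain ⟨B, hB⟩ := h
  have ha : a = star (B 0 0) * B 0 0 + star (B 1 0) * B 1 0 := by
    have := congrFun (congrFun hB 0) 0
    simpa [Matrix.mul_apply, Fin.sum_univ_two, Matrix.conjTranspose_apply] using this
  have hb : b = star (B 0 0) * B 0 1 + star (B 1 0) * B 1 1 := by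
    have := congrFun (congrFun hB 0) 1
    simpa [Matrix.mul_apply, Fin.sum_univ_two, Matrix.conjTranspose_apply] using this
  have hd : d = star (B 0 1) * B 0 1 + star (B 1 1) * B 1 1 := by
    have := congrFun (congrFun hB 1) 1
    simpa [Matrix.mul_apply, Fin.sum_univ_two, Matrix.conjTranspose_apply] using this
  have key : d - star b * z - star z * b + star z * a * z =
      star (B 0 1 - B 0 0 * z) * (B 0 1 - B 0 0 * z) +
      star (B 1 1 - B 1 0 * z) * (B 1 1 - B 1 0 * z) := by
    subst ha hb hd
    simp only [star_sub, star_mul, star_add, star_star]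
    noncomm_ring
  rw [key]
  exact add_nonneg (star_mul_self_nonneg _) (star_mul_self_nonneg _)

theorem stmt_6 {𝒜 ℬ : Type*} [CStarAlgebra 𝒜] [CStarAlgebra ℬ]
    [PartialOrder 𝒜] [StarOrderedRing 𝒜] [PartialOrder ℬ] [StarOrderedRing ℬ] (Φ : 𝒜 → ℬ)
    (hmono : ∀ A B : 𝒜, 0 ≤ B → B ≤ A → Φ B ≤ Φ A)
    (hCS : ∀ A B : 𝒜, MatPos !![Φ (star A * A), Φ (star A * B);
      star (Φ (star A * B)), Φ (star B * B)])
    (h1pos : 0 ≤ Φ 1) (h1inv : IsUnit (Φ 1)) :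
    (∀ A : 𝒜, star (Φ A) * Ring.inverse (Φ 1) * Φ A ≤ Φ (star A * A)) ∧
      (Φ 1 ≤ 1 → ∀ A : 𝒜, star (Φ A) * Φ A ≤ Φ (star A * A)) := by
  have hpos : ∀ A : 𝒜, MatPos !![Φ 1, Φ A; star (Φ A), Φ (star A * A)] := by
    intro A
    have := hCS 1 A
    simpa using this
  have hsa : star (Ring.inverse (Φ 1)) = Ring.inverse (Φ 1) := by
    rw [← Ring.inverse_star, (IsSelfAdjoint.of_nonneg h1pos).star_eq]
  constructor
  · intro A
    have h := matpos_key (hpos A) (Ring.inverse (Φ 1) * Φ A)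
    have hstar : star (Ring.inverse (Φ 1) * Φ A) = star (Φ A) * Ring.inverse (Φ 1) := by
      rw [star_mul, hsa]
    rw [hstar] at h
    have hc : star (Φ A) * Ring.inverse (Φ 1) * Φ 1 * (Ring.inverse (Φ 1) * Φ A) =
        star (Φ A) * Ring.inverse (Φ 1) * Φ A := by
      rw [mul_assoc (star (Φ A) * Ring.inverse (Φ 1)), ← mul_assoc (Φ 1),
        Ring.mul_inverse_cancel _ h1inv, one_mul]
    rw [hc, sub_add_cancel] at h
    rw [mul_assoc]
    exact sub_nonneg.mp h
  · intro h1le A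
    have h := matpos_key (hpos A) (Φ A)
    have hconj : star (Φ A) * Φ 1 * Φ A ≤ star (Φ A) * Φ A := by
      simpa using star_left_conjugate_le_conjugate h1le (Φ A)
    have h2 : star (Φ A) * Φ A - star (Φ A) * Φ 1 * Φ A
        ≤ Φ (star A * A) - star (Φ A) * Φ A := by
      apply sub_nonneg.mp
      convert h using 1
      abel
    exact sub_nonneg.mp (le_trans (sub_nonneg.mpr hconj) h2)
end

section
/- (Choi's inequality for Lieb maps, part b) Let Φ: 𝒜 → ℬ be a unital Lieb map between unital C*-algebras. Then Φ(A⁻¹) ≥ Φ(A)⁻¹ for every positive invertible A ∈ 𝒜. -/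
open scoped Matrix ComplexOrder

theorem stmt_7 {𝒜 ℬ : Type*} [CStarAlgebra 𝒜] [CStarAlgebra ℬ]
    [PartialOrder 𝒜] [StarOrderedRing 𝒜] [PartialOrder ℬ] [StarOrderedRing ℬ] (Φ : 𝒜 → ℬ)
    (hmono : ∀ A B : 𝒜, 0 ≤ B → B ≤ A → Φ B ≤ Φ A)
    (hCS : ∀ A B : 𝒜, MatPos !![Φ (star A * A), Φ (star A * B);
      star (Φ (star A * B)), Φ (star B * B)])
    (hu : Φ 1 = 1) :
    ∀ A : 𝒜, 0 ≤ A → IsUnit A → Ring.inverse (Φ A) ≤ Φ (Ring.inverse A) := by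
  intro A hA hAu
  -- square root of A
  set S : 𝒜 := CFC.sqrt A with hS
  have hSnn : 0 ≤ S := CFC.sqrt_nonneg A
  have hSsa : star S = S := hSnn.isSelfAdjoint.star_eq
  have hSS : S * S = A := CFC.sqrt_mul_sqrt_self A hA
  have hSu : IsUnit S := by
    obtain ⟨u, hu'⟩ := hAu
    have h1 : (↑u⁻¹ * S) * S = 1 := by rw [mul_assoc, hSS, ← hu', u.inv_mul]
    have h2 : S * (S * ↑u⁻¹) = 1 := by rw [← mul_assoc, hSS, ← hu', u.mul_inv]
    have heq : (↑u⁻¹ * S : 𝒜) = S * ↑u⁻¹ := by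
      calc (↑u⁻¹ * S : 𝒜) = (↑u⁻¹ * S) * (S * (S * ↑u⁻¹)) := by rw [h2, mul_one]
        _ = ((↑u⁻¹ * S) * S) * (S * ↑u⁻¹) := by noncomm_ring
        _ = S * ↑u⁻¹ := by rw [h1, one_mul]
    exact isUnit_iff_exists.mpr ⟨S * ↑u⁻¹, h2, by rw [← heq]; exact h1⟩
  set T : 𝒜 := Ring.inverse S with hT
  have hTsa : star T = T := by rw [hT, ← Ring.inverse_star, hSsa]
  have hST : S * T = 1 := by rw [hT, Ring.mul_inverse_cancel S hSu]
  have hTT : star T * T = Ring.inverse A := by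
    rw [hTsa, hT, ← hSS, Ring.mul_inverse_rev' (Commute.refl S)]
  have hCS' := hCS S T
  rw [hSsa] at hCS'
  rw [hSS, hST, hTT, hu, star_one] at hCS'
  obtain ⟨C, hM⟩ := hCS'
  have h00 : Φ A = ∑ k, star (C k 0) * C k 0 := by
    have := congrFun (congrFun hM 0) 0
    simpa [Matrix.mul_apply, Matrix.conjTranspose_apply] using this
  have h01 : (1 : ℬ) = ∑ k, star (C k 0) * C k 1 := by
    have := congrFun (congrFun hM 0) 1
    simpa [Matrix.mul_apply, Matrix.conjTranspose_apply] using this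
  have h11 : Φ (Ring.inverse A) = ∑ k, star (C k 1) * C k 1 := by
    have := congrFun (congrFun hM 1) 1
    simpa [Matrix.mul_apply, Matrix.conjTranspose_apply] using this
  have h10 : (1 : ℬ) = ∑ k, star (C k 1) * C k 0 := by
    have : star (1 : ℬ) = star (∑ k, star (C k 0) * C k 1) := by rw [← h01]
    simpa [star_sum] using this
  have hQnn : 0 ≤ Φ (Ring.inverse A) := by
    rw [h11]; exact Finset.sum_nonneg fun k _ => star_mul_self_nonneg _
  by_cases hPu : IsUnit (Φ A)
  · set p : ℬ := Ring.inverse (Φ A) with hp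
    have hPsa : star (Φ A) = Φ A := by
      rw [h00, star_sum]
      exact Finset.sum_congr rfl fun k _ => by simp [star_mul]
    have hpsa : star p = p := by rw [hp, ← Ring.inverse_star, hPsa]
    have hpP : p * Φ A = 1 := Ring.inverse_mul_cancel _ hPu
    have key : Φ (Ring.inverse A) - p
        = ∑ k, star (C k 1 - C k 0 * p) * (C k 1 - C k 0 * p) := by
      have expand : ∀ k : Fin 2,
          star (C k 1 - C k 0 * p) * (C k 1 - C k 0 * p)
          = star (C k 1) * C k 1 - (star (C k 1) * C k 0) * p
            - star p * (star (C k 0) * C k 1) + star p * (star (C k 0) * C k 0) * p := by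
        intro k
        simp only [star_sub, star_mul]
        noncomm_ring
      calc Φ (Ring.inverse A) - p
          = (∑ k, star (C k 1) * C k 1) - (∑ k, star (C k 1) * C k 0) * p
            - star p * (∑ k, star (C k 0) * C k 1) + star p * (∑ k, star (C k 0) * C k 0) * p := by
            have hPp : Φ A * p = 1 := Ring.mul_inverse_cancel _ hPu
            rw [← h11, ← h01, ← h10, ← h00, hpsa, one_mul, mul_one, mul_assoc, hPp, mul_one]
            abel
        _ = ∑ k, star (C k 1 - C k 0 * p) * (C k 1 - C k 0 * p) := by
            conv_rhs => rw [Finset.sum_congr rfl fun k _ => expand k]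
            rw [Finset.sum_add_distrib, Finset.sum_sub_distrib, Finset.sum_sub_distrib,
              ← Finset.sum_mul, ← Finset.mul_sum, ← Finset.sum_mul, ← Finset.mul_sum]
    have hnn : 0 ≤ Φ (Ring.inverse A) - p := by
      rw [key]; exact Finset.sum_nonneg fun k _ => star_mul_self_nonneg _
    exact sub_nonneg.mp hnn
  · rw [Ring.inverse_non_unit _ hPu]
    exact hQnn
end

section
/- Let 𝒜 be a unital C*-algebra and ‖·‖ an algebra norm on 𝒜 that is a Lieb map (monotone on positives, viewed as a map into ℂ, and satisfying the Cauchy–Schwarz block positivity). Then ‖A*A‖ ≥ ‖A‖² for every A, so ‖·‖ satisfies the C*-identity ‖A*A‖ = ‖A‖². -/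
open scoped Matrix ComplexOrder

theorem stmt_8 {𝒜 : Type*} [CStarAlgebra 𝒜] [PartialOrder 𝒜] [StarOrderedRing 𝒜]
    (N : 𝒜 → ℝ)
    (hnonneg : ∀ x : 𝒜, 0 ≤ N x) (hzero : ∀ x : 𝒜, N x = 0 ↔ x = 0)
    (htri : ∀ x y : 𝒜, N (x + y) ≤ N x + N y)
    (hhom : ∀ (c : ℂ) (x : 𝒜), N (c • x) = ‖c‖ * N x)
    (hsub : ∀ x y : 𝒜, N (x * y) ≤ N x * N y) (hone : N 1 = 1)
    (hmono : ∀ A B : 𝒜, 0 ≤ B → B ≤ A → N B ≤ N A)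
    (hCS : ∀ A B : 𝒜, Matrix.PosSemidef !![(N (star A * A) : ℂ), (N (star A * B) : ℂ);
      (N (star A * B) : ℂ), (N (star B * B) : ℂ)]) :
    ∀ A : 𝒜, (N A) ^ 2 ≤ N (star A * A) ∧ N (star A * A) = (N A) ^ 2 := by
  have key : ∀ A : 𝒜, N A ^ 2 ≤ N (star A * A) := by
    intro A
    have h := (hCS 1 A).dotProduct_mulVec_nonneg ![(N A : ℂ), -1]
    simp only [star_one, one_mul, hone] at h
    rw [Complex.le_def] at h
    obtain ⟨hre, -⟩ := h
    simp [dotProduct, Matrix.mulVec, Fin.sum_univ_two] at hre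
    nlinarith [hre]
  intro A
  refine ⟨key A, ?_⟩
  have hNstar : ∀ A : 𝒜, N A ≤ N (star A) := by
    intro A
    rcases eq_or_lt_of_le (hnonneg A) with h0 | hpos
    · rw [← h0]; exact hnonneg _
    · have h1 : N A * N A ≤ N (star A) * N A := by
        have := le_trans (key A) (hsub (star A) A)
        nlinarith
      exact le_of_mul_le_mul_right h1 hpos
  have heq : N (star A) = N A := by
    have h1 := hNstar A
    have h2 := hNstar (star A)
    rw [star_star] at h2
    linarith
  have hle : N (star A * A) ≤ N A ^ 2 := by
    calc N (star A * A) ≤ N (star A) * N A := hsub _ _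
    _ = N A ^ 2 := by rw [heq]; ring
  linarith [key A]
end

section
/- The C*-norm on a unital C*-algebra is 2-positive: if the 2×2 matrix [[A, X*], [X, B]] is positive in M₂(𝒜), then the complex matrix [[‖A‖, ‖X*‖], [‖X‖, ‖B‖]] is positive semidefinite, i.e., ‖A‖‖B‖ ≥ ‖X‖². -/
open scoped Matrix ComplexOrder

section aux
variable {𝒜 : Type*} [CStarAlgebra 𝒜]
noncomputable local instance : PartialOrder 𝒜 := CStarAlgebra.spectralOrder 𝒜
local instance : StarOrderedRing 𝒜 := CStarAlgebra.spectralOrderedRing 𝒜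

private lemma expand_aux (b0 b1 c0 c1 : 𝒜) (t : ℝ) :
    star (b0 - t • (c0 * (star c0 * b0 + star c1 * b1))) *
        (b0 - t • (c0 * (star c0 * b0 + star c1 * b1)))
      + star (b1 - t • (c1 * (star c0 * b0 + star c1 * b1))) *
        (b1 - t • (c1 * (star c0 * b0 + star c1 * b1)))
    = (star b0 * b0 + star b1 * b1)
      - (2*t) • (star (star c0 * b0 + star c1 * b1) * (star c0 * b0 + star c1 * b1))
      + (t^2) • ((star (star c0 * b0 + star c1 * b1) * (star c0 * c0 + star c1 * c1)) *
          (star c0 * b0 + star c1 * b1)) := by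
  simp only [star_sub, star_smul, star_trivial, star_add, star_mul, star_star, mul_add,
    add_mul, sub_mul, mul_sub, smul_mul_assoc, mul_smul_comm, smul_smul, smul_sub, smul_add,
    mul_assoc]
  module

private lemma key_aux (A B X b0 b1 c0 c1 : 𝒜)
    (hA : A = star b0 * b0 + star b1 * b1)
    (hB : B = star c0 * c0 + star c1 * c1)
    (hX : X = star c0 * b0 + star c1 * b1) :
    ‖X‖ ^ 2 ≤ ‖A‖ * ‖B‖ := by
  have hBsa : IsSelfAdjoint B := by
    rw [hB]; simp [IsSelfAdjoint, star_add, star_mul]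
  by_cases hB0 : ‖B‖ = 0
  · have hBz : B = 0 := norm_eq_zero.mp hB0
    have h0 : star c0 * c0 + star c1 * c1 = 0 := by rw [← hB, hBz]
    have hc0 : star c0 * c0 = 0 := by
      refine le_antisymm ?_ (star_mul_self_nonneg _)
      calc star c0 * c0 ≤ star c0 * c0 + star c1 * c1 :=
            le_add_of_nonneg_right (star_mul_self_nonneg _)
        _ = 0 := h0
    have hc1 : star c1 * c1 = 0 := by
      refine le_antisymm ?_ (star_mul_self_nonneg _)
      calc star c1 * c1 ≤ star c0 * c0 + star c1 * c1 :=
            le_add_of_nonneg_left (star_mul_self_nonneg _)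
        _ = 0 := h0
    have hX0 : X = 0 := by
      rw [hX, (CStarRing.star_mul_self_eq_zero_iff c0).mp hc0,
        (CStarRing.star_mul_self_eq_zero_iff c1).mp hc1]
      simp
    simp [hX0, hB0]
  · have hBn : 0 < ‖B‖ := lt_of_le_of_ne (norm_nonneg B) (Ne.symm hB0)
    set t : ℝ := ‖B‖⁻¹ with ht
    have htpos : 0 < t := inv_pos.mpr hBn
    set S : 𝒜 := star X * X with hS
    set Q : 𝒜 := star X * B * X with hQ
    have h1 : (0:𝒜) ≤ A - (2*t) • S + (t^2) • Q := by
      have he := expand_aux b0 b1 c0 c1 t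
      rw [← hX, ← hA, ← hB] at he
      rw [hS, hQ, ← he]
      exact add_nonneg (star_mul_self_nonneg _) (star_mul_self_nonneg _)
    have h4 : (2*t) • S - (t^2) • Q ≤ A := by
      rw [← sub_nonneg]
      have e : A - ((2*t) • S - (t^2) • Q) = A - (2*t) • S + (t^2) • Q := by abel
      rw [e]; exact h1
    have h3 : Q ≤ ‖B‖ • S := CStarAlgebra.star_left_conjugate_le_norm_smul hBsa
    have h5 : (t^2) • Q ≤ (t^2) • (‖B‖ • S) := smul_le_smul_of_nonneg_left h3 (sq_nonneg t)
    have h6 : t • S ≤ A := by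
      calc t • S = (2*t) • S - (t^2) • (‖B‖ • S) := by
            rw [smul_smul, ← sub_smul]; congr 1; rw [ht]; field_simp; ring
        _ ≤ (2*t) • S - (t^2) • Q := sub_le_sub_left h5 _
        _ ≤ A := h4
    have h7 : S ≤ ‖B‖ • A := by
      have h := smul_le_smul_of_nonneg_left h6 hBn.le
      rwa [smul_smul, mul_inv_cancel₀ (ne_of_gt hBn), one_smul] at h
    have h8 : ‖S‖ ≤ ‖‖B‖ • A‖ :=
      CStarAlgebra.norm_le_norm_of_nonneg_of_le (star_mul_self_nonneg X) h7
    calc ‖X‖ ^ 2 = ‖S‖ := by rw [hS, CStarRing.norm_star_mul_self, sq]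
      _ ≤ ‖‖B‖ • A‖ := h8
      _ = ‖B‖ * ‖A‖ := by rw [norm_smul, Real.norm_eq_abs, abs_of_nonneg (norm_nonneg B)]
      _ = ‖A‖ * ‖B‖ := mul_comm _ _

end aux

private lemma psd_aux (a b c : ℝ) (ha : 0 ≤ a) (hb : 0 ≤ b) (h : c ^ 2 ≤ a * b) :
    Matrix.PosSemidef !![(a:ℂ), c; c, b] := by
  rw [Matrix.posSemidef_iff_dotProduct_mulVec]
  constructor
  · ext i j
    fin_cases i <;> fin_cases j <;>
      simp [Matrix.conjTranspose_apply]
  · intro x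
    have e : dotProduct (star x) (!![(a:ℂ), c; c, b] *ᵥ x)
        = (starRingEnd ℂ) (x 0) * (a * x 0 + c * x 1)
          + (starRingEnd ℂ) (x 1) * (c * x 0 + b * x 1) := by
      simp [Matrix.mulVec, dotProduct, Fin.sum_univ_two]
    rw [e, Complex.le_def]
    set x0 := x 0
    set x1 := x 1
    constructor
    · simp only [Complex.zero_re, Complex.add_re, Complex.mul_re, Complex.add_im,
        Complex.mul_im, Complex.ofReal_re, Complex.ofReal_im, RCLike.star_def,
        Complex.conj_re, Complex.conj_im]
      have key : 0 ≤ a * (x0.re^2 + x0.im^2) + b * (x1.re^2 + x1.im^2)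
          + 2 * c * (x0.re * x1.re + x0.im * x1.im) := by
        set s : ℝ := x0.re * x1.re + x0.im * x1.im with hs
        set U : ℝ := x0.re^2 + x0.im^2 with hU
        set V : ℝ := x1.re^2 + x1.im^2 with hV
        have hUn : 0 ≤ U := by positivity
        have hVn : 0 ≤ V := by positivity
        have hsUV : s^2 ≤ U * V := by
          rw [hs, hU, hV]; nlinarith [sq_nonneg (x0.re * x1.im - x0.im * x1.re)]
        have hQ : 0 ≤ a * U + b * V := add_nonneg (mul_nonneg ha hUn) (mul_nonneg hb hVn)
        have hsq : (2*c*s)^2 ≤ (a*U + b*V)^2 := by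
          nlinarith [mul_le_mul h hsUV (sq_nonneg s) (mul_nonneg ha hb), sq_nonneg (a*U - b*V)]
        have habs : |2*c*s| ≤ |a*U + b*V| := by
          rw [← Real.sqrt_sq_eq_abs, ← Real.sqrt_sq_eq_abs]
          exact Real.sqrt_le_sqrt hsq
        rw [abs_of_nonneg hQ] at habs
        have := neg_abs_le (2*c*s)
        linarith
      linarith [key]
    · simp only [Complex.zero_im, Complex.add_im, Complex.add_re, Complex.mul_im,
        Complex.mul_re, Complex.ofReal_re, Complex.ofReal_im, RCLike.star_def,
        Complex.conj_re, Complex.conj_im]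
      ring

theorem stmt_9 {𝒜 : Type*} [CStarAlgebra 𝒜] (A B X : 𝒜)
    (h : MatPos !![A, star X; X, B]) :
    Matrix.PosSemidef !![(‖A‖ : ℂ), (‖star X‖ : ℂ); (‖X‖ : ℂ), (‖B‖ : ℂ)] ∧
      ‖X‖ ^ 2 ≤ ‖A‖ * ‖B‖ := by
  obtain ⟨C, hC⟩ := h
  have hA : A = star (C 0 0) * C 0 0 + star (C 1 0) * C 1 0 := by
    have h00 := congrFun (congrFun hC 0) 0
    simpa [Matrix.mul_apply, Fin.sum_univ_two, Matrix.conjTranspose_apply] using h00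
  have hB : B = star (C 0 1) * C 0 1 + star (C 1 1) * C 1 1 := by
    have h11 := congrFun (congrFun hC 1) 1
    simpa [Matrix.mul_apply, Fin.sum_univ_two, Matrix.conjTranspose_apply] using h11
  have hX : X = star (C 0 1) * C 0 0 + star (C 1 1) * C 1 0 := by
    have h10 := congrFun (congrFun hC 1) 0
    simpa [Matrix.mul_apply, Fin.sum_univ_two, Matrix.conjTranspose_apply] using h10
  have key : ‖X‖ ^ 2 ≤ ‖A‖ * ‖B‖ := key_aux A B X _ _ _ _ hA hB hX
  refine ⟨?_, key⟩
  rw [norm_star]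
  exact psd_aux ‖A‖ ‖B‖ ‖X‖ (norm_nonneg A) (norm_nonneg B) key
end

section
/- (Multiplicative domain for nonlinear 3-positive maps) Let Φ: 𝒜 → ℬ be a unital 3-positive (not necessarily linear) map between unital C*-algebras. If Φ(A*A) = Φ(A)*Φ(A) for some A ∈ 𝒜, then Φ(A*X) = Φ(A*)Φ(X) and Φ(XA) = Φ(X)Φ(A) for every X ∈ 𝒜. -/
open scoped Matrix ComplexOrder

lemma sum3_star_mul_self_eq_zero {B : Type*} [CStarAlgebra B] (x y z : B)
    (h : star x * x + star y * y + star z * z = 0) : x = 0 ∧ y = 0 ∧ z = 0 := by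
  letI := CStarAlgebra.spectralOrder B
  haveI := CStarAlgebra.spectralOrderedRing B
  have h1 : (0:B) ≤ star x * x := star_mul_self_nonneg x
  have h2 : (0:B) ≤ star y * y := star_mul_self_nonneg y
  have h3 : (0:B) ≤ star z * z := star_mul_self_nonneg z
  have hx : x = 0 := by
    rw [← CStarRing.star_mul_self_eq_zero_iff]
    refine le_antisymm ?_ h1
    calc star x * x ≤ star x * x + star y * y := le_add_of_nonneg_right h2
      _ ≤ star x * x + star y * y + star z * z := le_add_of_nonneg_right h3
      _ = 0 := h
  have hy : y = 0 := by
    rw [← CStarRing.star_mul_self_eq_zero_iff]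
    refine le_antisymm ?_ h2
    calc star y * y ≤ star x * x + star y * y := le_add_of_nonneg_left h1
      _ ≤ star x * x + star y * y + star z * z := le_add_of_nonneg_right h3
      _ = 0 := h
  have hz : z = 0 := by
    rw [← CStarRing.star_mul_self_eq_zero_iff]
    refine le_antisymm ?_ h3
    calc star z * z ≤ star x * x + star y * y + star z * z :=
          le_add_of_nonneg_left (add_nonneg h1 h2)
      _ = 0 := h
  exact ⟨hx, hy, hz⟩

lemma key_lemma {𝒜 ℬ : Type*} [CStarAlgebra 𝒜] [CStarAlgebra ℬ] (Φ : 𝒜 → ℬ)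
    (hu : Φ 1 = 1)
    (h3 : ∀ M : Matrix (Fin 3) (Fin 3) 𝒜, MatPos M → MatPos (M.map Φ))
    (A : 𝒜) (hA : Φ (star A * A) = star (Φ A) * Φ A) (X : 𝒜) :
    Φ (star A * X) = star (Φ A) * Φ X ∧ Φ (star X * A) = Φ (star X) * Φ A ∧
      Φ (star A) = star (Φ A) := by
  set w : Fin 3 → 𝒜 := ![1, A, X] with hw
  set B : Matrix (Fin 3) (Fin 3) 𝒜 := Matrix.of ![w, 0, 0] with hB
  obtain ⟨C, hC⟩ := h3 (Bᴴ * B) ⟨B, rfl⟩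
  have hP : ∀ i j, Φ (star (w i) * w j) =
      star (C 0 i) * C 0 j + star (C 1 i) * C 1 j + star (C 2 i) * C 2 j := by
    intro i j
    have h := congrFun (congrFun hC i) j
    simp only [Matrix.map_apply, Matrix.mul_apply, Matrix.conjTranspose_apply,
      Fin.sum_univ_three, hB, Matrix.of_apply, Matrix.cons_val_zero, Matrix.cons_val_one,
      Matrix.head_cons, Matrix.cons_val_two, Matrix.tail_cons, Pi.zero_apply, star_zero,
      zero_mul, add_zero] at h
    exact h
  set b : ℬ := Φ A with hb
  have e00 : (1:ℬ) = star (C 0 0) * C 0 0 + star (C 1 0) * C 1 0 + star (C 2 0) * C 2 0 := by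
    have := hP 0 0
    simpa [hw, hu] using this
  have e01 : b = star (C 0 0) * C 0 1 + star (C 1 0) * C 1 1 + star (C 2 0) * C 2 1 := by
    have := hP 0 1
    simpa [hw, hb] using this
  have e10 : Φ (star A) = star (C 0 1) * C 0 0 + star (C 1 1) * C 1 0 + star (C 2 1) * C 2 0 := by
    have := hP 1 0
    simpa [hw] using this
  have e11 : star b * b = star (C 0 1) * C 0 1 + star (C 1 1) * C 1 1 + star (C 2 1) * C 2 1 := by
    have := hP 1 1
    simpa [hw, hb, hA] using this
  have hsym : Φ (star A) = star b := by
    rw [e10, e01]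
    simp only [star_add, star_mul, star_star]
  have hv : ∀ k : Fin 3, C k 1 = C k 0 * b := by
    have hS : star (C 0 1 - C 0 0 * b) * (C 0 1 - C 0 0 * b)
        + star (C 1 1 - C 1 0 * b) * (C 1 1 - C 1 0 * b)
        + star (C 2 1 - C 2 0 * b) * (C 2 1 - C 2 0 * b) = 0 := by
      have expand : ∀ u v : ℬ, star (u - v * b) * (u - v * b) =
          star u * u - (star u * v) * b - star b * (star v * u) +
            star b * (star v * v) * b := by
        intro u v
        simp only [star_sub, star_mul]
        noncomm_ring
      rw [expand, expand, expand]
      have key : (star (C 0 1) * C 0 1 + star (C 1 1) * C 1 1 + star (C 2 1) * C 2 1)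
          - (star (C 0 1) * C 0 0 + star (C 1 1) * C 1 0 + star (C 2 1) * C 2 0) * b
          - star b * (star (C 0 0) * C 0 1 + star (C 1 0) * C 1 1 + star (C 2 0) * C 2 1)
          + star b * (star (C 0 0) * C 0 0 + star (C 1 0) * C 1 0 + star (C 2 0) * C 2 0) * b
          = 0 := by
        rw [← e11, ← e10, ← e01, ← e00, hsym]
        noncomm_ring
      calc _ = (star (C 0 1) * C 0 1 + star (C 1 1) * C 1 1 + star (C 2 1) * C 2 1)
          - (star (C 0 1) * C 0 0 + star (C 1 1) * C 1 0 + star (C 2 1) * C 2 0) * b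
          - star b * (star (C 0 0) * C 0 1 + star (C 1 0) * C 1 1 + star (C 2 0) * C 2 1)
          + star b * (star (C 0 0) * C 0 0 + star (C 1 0) * C 1 0 + star (C 2 0) * C 2 0) * b := by
            noncomm_ring
        _ = 0 := key
    obtain ⟨h0, h1, h2⟩ := sum3_star_mul_self_eq_zero _ _ _ hS
    intro k
    fin_cases k
    · exact sub_eq_zero.mp h0
    · exact sub_eq_zero.mp h1
    · exact sub_eq_zero.mp h2
  refine ⟨?_, ?_, hsym⟩
  · have := hP 1 2
    simp only [hw, Matrix.cons_val_one, Matrix.head_cons, Matrix.cons_val_two,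
      Matrix.tail_cons, Matrix.cons_val_zero] at this
    rw [this, hv 0, hv 1, hv 2]
    have h02 := hP 0 2
    simp only [hw, Matrix.cons_val_zero, Matrix.cons_val_two, Matrix.tail_cons,
      Matrix.head_cons, star_one, one_mul] at h02
    simp only [star_mul]
    rw [h02]
    noncomm_ring
  · have := hP 2 1
    simp only [hw, Matrix.cons_val_one, Matrix.head_cons, Matrix.cons_val_two,
      Matrix.tail_cons, Matrix.cons_val_zero] at this
    rw [this, hv 0, hv 1, hv 2]
    have h20 := hP 2 0
    simp only [hw, Matrix.cons_val_zero, Matrix.cons_val_two, Matrix.tail_cons,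
      Matrix.head_cons, mul_one] at h20
    rw [h20]
    noncomm_ring

theorem stmt_11 {𝒜 ℬ : Type*} [CStarAlgebra 𝒜] [CStarAlgebra ℬ] (Φ : 𝒜 → ℬ)
    (hu : Φ 1 = 1)
    (h3 : ∀ M : Matrix (Fin 3) (Fin 3) 𝒜, MatPos M → MatPos (M.map Φ))
    (A : 𝒜) (hA : Φ (star A * A) = star (Φ A) * Φ A) :
    ∀ X : 𝒜, Φ (star A * X) = Φ (star A) * Φ X ∧ Φ (X * A) = Φ X * Φ A := by
  intro X
  obtain ⟨h1, -, hsym⟩ := key_lemma Φ hu h3 A hA X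
  obtain ⟨-, h2, -⟩ := key_lemma Φ hu h3 A hA (star X)
  refine ⟨by rw [h1, hsym], ?_⟩
  simpa using h2
end

section
/- If ‖·‖ is an algebra norm on a unital C*-algebra 𝒜 that is 3-positive as a map into ℂ, then ‖XY‖ = ‖X‖·‖Y‖ for all X, Y ∈ 𝒜. -/
open scoped Matrix ComplexOrder

lemma matPos_of_vec {𝒜 : Type*} [CStarAlgebra 𝒜] (v : Fin 3 → 𝒜) :
    MatPos (Matrix.of fun i j => star (v i) * v j) := by
  refine ⟨Matrix.of fun i j => if i = 0 then v j else 0, ?_⟩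
  ext i j
  simp [Matrix.mul_apply, Matrix.conjTranspose_apply, Fin.sum_univ_three]

theorem stmt_12 {𝒜 : Type*} [CStarAlgebra 𝒜] (N : 𝒜 → ℝ)
    (hnonneg : ∀ x : 𝒜, 0 ≤ N x) (hzero : ∀ x : 𝒜, N x = 0 ↔ x = 0)
    (htri : ∀ x y : 𝒜, N (x + y) ≤ N x + N y)
    (hhom : ∀ (c : ℂ) (x : 𝒜), N (c • x) = ‖c‖ * N x)
    (hsub : ∀ x y : 𝒜, N (x * y) ≤ N x * N y) (hone : N 1 = 1)
    (h3 : ∀ M : Matrix (Fin 3) (Fin 3) 𝒜, MatPos M →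
      Matrix.PosSemidef (M.map fun a => (N a : ℂ))) :
    ∀ X Y : 𝒜, N (X * Y) = N X * N Y := by
  have key : ∀ v : Fin 3 → 𝒜, Matrix.PosSemidef
      ((Matrix.of fun i j => star (v i) * v j).map fun a => (N a : ℂ)) :=
    fun v => h3 _ (matPos_of_vec v)
  have hNzero : N (0 : 𝒜) = 0 := (hzero 0).mpr rfl
  -- Step 1a: N (star x) = N x
  have hstar : ∀ x : 𝒜, N (star x) = N x := by
    intro x
    have hH := (key ![1, x, 0]).1
    have h01 := congrFun (congrFun hH 0) 1
    simp [Matrix.conjTranspose_apply, Matrix.map_apply] at h01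
    exact_mod_cast h01
  -- Step 1b: N (star x * x) = N x * N x
  have hsq : ∀ x : 𝒜, N (star x * x) = N x * N x := by
    intro x
    have hle : N (star x * x) ≤ N x * N x := by
      calc N (star x * x) ≤ N (star x) * N x := hsub _ _
        _ = N x * N x := by rw [hstar]
    have hP := (key ![1, x, 0]).dotProduct_mulVec_nonneg ![(N x : ℂ), -1, 0]
    have hcalc : dotProduct (star ![(N x : ℂ), -1, 0])
        (((Matrix.of fun i j => star (![1, x, 0] i) * ![1, x, 0] j).map
          fun a => (N a : ℂ)) *ᵥ ![(N x : ℂ), -1, 0])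
        = ((N (star x * x) - N x * N x : ℝ) : ℂ) := by
      simp [dotProduct, Matrix.mulVec, Matrix.map_apply, Fin.sum_univ_three,
        hstar, hone, hNzero]
      push_cast
      ring
    rw [hcalc] at hP
    have := Complex.zero_le_real.mp hP
    linarith
  intro X Y
  have e1 : N (X * star X) = N X * N X := by
    have := hsq (star X); rwa [star_star, hstar] at this
  have e2 : N (star Y * star X) = N (X * Y) := by rw [← star_mul, hstar]
  -- Step 2: the quadratic form inequality for all real t
  have key2 : ∀ t : ℝ,
      0 ≤ 2 * t * (N X * N Y - N (X * Y)) + t ^ 2 * (N Y) ^ 2 := by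
    intro t
    have hP := (key ![1, star X, Y]).dotProduct_mulVec_nonneg ![(N X : ℂ), -1, (t : ℂ)]
    have hcalc : dotProduct (star ![(N X : ℂ), -1, (t : ℂ)])
        (((Matrix.of fun i j => star (![1, star X, Y] i) * ![1, star X, Y] j).map
          fun a => (N a : ℂ)) *ᵥ ![(N X : ℂ), -1, (t : ℂ)])
        = ((2 * t * (N X * N Y - N (X * Y)) + t ^ 2 * (N Y) ^ 2 : ℝ) : ℂ) := by
      simp [dotProduct, Matrix.mulVec, Matrix.map_apply, Fin.sum_univ_three,
        hstar, hone, hsq, e1, e2]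
      push_cast
      ring
    rw [hcalc] at hP
    exact Complex.zero_le_real.mp hP
  set c : ℝ := N X * N Y - N (X * Y) with hc
  set d : ℝ := (N Y) ^ 2 with hd
  have hd0 : 0 ≤ d := sq_nonneg _
  have hd1 : (0 : ℝ) < d + 1 := by linarith
  set u : ℝ := -(c / (d + 1)) with hu
  have hud : u * (d + 1) = -c := by
    rw [hu, neg_mul, div_mul_cancel₀ _ (ne_of_gt hd1)]
  have h := key2 u
  have hcu : c = -(u * (d + 1)) := by linarith
  rw [hcu] at h
  have hu2 : u ^ 2 * (d + 2) ≤ 0 := by nlinarith [h]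
  have hu0 : u = 0 := by nlinarith [sq_nonneg u]
  have hc0 : c = 0 := by
    have := hud
    rw [hu0] at this
    linarith
  linarith
end

section
/- (Superadditivity of 3-positive maps) Let Φ: 𝒜 → ℬ be a 3-positive (not necessarily linear) map between unital C*-algebras. Then 2Φ(0) + Φ(A+B) ≥ Φ(A) + Φ(B) for all positive A, B ∈ 𝒜. In particular, if Φ(0) = 0 then Φ is superadditive on positive elements. -/
open scoped Matrix ComplexOrder

theorem stmt_13 {𝒜 ℬ : Type*} [CStarAlgebra 𝒜] [CStarAlgebra ℬ]
    [PartialOrder 𝒜] [StarOrderedRing 𝒜] [PartialOrder ℬ] [StarOrderedRing ℬ] (Φ : 𝒜 → ℬ)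
    (h3 : ∀ M : Matrix (Fin 3) (Fin 3) 𝒜, MatPos M → MatPos (M.map Φ)) :
    (∀ A B : 𝒜, 0 ≤ A → 0 ≤ B → Φ A + Φ B ≤ Φ 0 + Φ 0 + Φ (A + B)) ∧
      (Φ 0 = 0 → ∀ A B : 𝒜, 0 ≤ A → 0 ≤ B → Φ A + Φ B ≤ Φ (A + B)) := by
  have main : ∀ A B : 𝒜, 0 ≤ A → 0 ≤ B → Φ A + Φ B ≤ Φ 0 + Φ 0 + Φ (A + B) := by
    intro A B hA hB
    set a := CFC.sqrt A with ha
    set b := CFC.sqrt B with hb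
    have haA : star a * a = A := by
      rw [(IsSelfAdjoint.of_nonneg (CFC.sqrt_nonneg A)).star_eq, CFC.sqrt_mul_sqrt_self A hA]
    have hbB : star b * b = B := by
      rw [(IsSelfAdjoint.of_nonneg (CFC.sqrt_nonneg B)).star_eq, CFC.sqrt_mul_sqrt_self B hB]
    set M : Matrix (Fin 3) (Fin 3) 𝒜 := !![A, A, 0; A, A + B, B; 0, B, B] with hMdef
    have hM : MatPos M := by
      refine ⟨!![a, a, 0; 0, b, b; 0, 0, 0], ?_⟩
      ext i j
      fin_cases i <;> fin_cases j <;>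
        simp [Matrix.mul_apply, Fin.sum_univ_three, Matrix.conjTranspose_apply,
          Matrix.vecHead, Matrix.vecTail, haA, hbB, hMdef]
    obtain ⟨D, hD⟩ := h3 M hM
    have hent : ∀ j k, ∑ i : Fin 3, star (D i j) * D i k = Φ (M j k) := by
      intro j k
      have h : (M.map Φ) j k = (Dᴴ * D) j k := by rw [hD]
      simpa [Matrix.mul_apply, Matrix.conjTranspose_apply, Matrix.map_apply] using h.symm
    set s : Fin 3 → ℬ := fun i => D i 0 - D i 1 + D i 2 with hs
    have key : (0 : ℬ) ≤ ∑ i : Fin 3, star (s i) * s i :=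
      Finset.sum_nonneg fun i _ => star_mul_self_nonneg _
    have expand : ∑ i : Fin 3, star (s i) * s i
        = Φ (M 0 0) - Φ (M 0 1) + Φ (M 0 2) - (Φ (M 1 0) - Φ (M 1 1) + Φ (M 1 2))
          + (Φ (M 2 0) - Φ (M 2 1) + Φ (M 2 2)) := by
      have step : ∑ i : Fin 3, star (s i) * s i =
          ∑ i : Fin 3, (star (D i 0) * D i 0 - star (D i 0) * D i 1 + star (D i 0) * D i 2
            - (star (D i 1) * D i 0 - star (D i 1) * D i 1 + star (D i 1) * D i 2)
            + (star (D i 2) * D i 0 - star (D i 2) * D i 1 + star (D i 2) * D i 2)) := by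
        refine Finset.sum_congr rfl fun i _ => ?_
        simp only [hs, star_add, star_sub]
        noncomm_ring
      rw [step]
      simp only [Finset.sum_add_distrib, Finset.sum_sub_distrib, hent]
    have hMe : M 0 0 = A ∧ M 0 1 = A ∧ M 0 2 = 0 ∧ M 1 0 = A ∧ M 1 1 = A + B ∧ M 1 2 = B
        ∧ M 2 0 = 0 ∧ M 2 1 = B ∧ M 2 2 = B := by
      refine ⟨?_, ?_, ?_, ?_, ?_, ?_, ?_, ?_, ?_⟩ <;> simp [hMdef, Matrix.vecHead, Matrix.vecTail]
    obtain ⟨e1, e2, e3, e4, e5, e6, e7, e8, e9⟩ := hMe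
    rw [expand, e1, e2, e3, e4, e5, e6, e7, e8, e9] at key
    rw [← sub_nonneg]
    calc (0 : ℬ) ≤ Φ A - Φ A + Φ 0 - (Φ A - Φ (A + B) + Φ B) + (Φ 0 - Φ B + Φ B) := key
      _ = Φ 0 + Φ 0 + Φ (A + B) - (Φ A + Φ B) := by abel
  exact ⟨main, fun h0 A B hA hB => by simpa [h0] using main A B hA hB⟩
end

section
/- If (𝒜, ‖·‖) is a unital C*-algebra whose norm is strictly convex and 3-positive (as a map into ℂ), then 𝒜 = ℂ, i.e., 𝒜 is one-dimensional. -/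
open scoped Matrix ComplexOrder

lemma key_pos {𝒜 : Type*} [CStarAlgebra 𝒜]
    (hsc : ∀ X Y : 𝒜, X ≠ 0 → Y ≠ 0 → ‖X + Y‖ = ‖X‖ + ‖Y‖ → ∃ c : ℂ, X = c • Y)
    (h3 : ∀ M : Matrix (Fin 3) (Fin 3) 𝒜, MatPos M →
      Matrix.PosSemidef (M.map fun a => (‖a‖ : ℂ)))
    (b : 𝒜) : ∃ c : ℂ, star b * b = c • (1 : 𝒜) := by
  set p := star b * b with hp
  by_cases hp0 : p = 0
  · exact ⟨0, by simp [hp0]⟩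
  have h1 : (1 : 𝒜) ≠ 0 := by
    intro h
    exact hp0 (by rw [← mul_one p, h, mul_zero])
  have hM : MatPos (!![p, p, 0; p, p+1, 1; 0, 1, 1]) := by
    refine ⟨!![b, b, 0; 0, 1, 1; 0, 0, 0], ?_⟩
    ext i j
    fin_cases i <;> fin_cases j <;>
      simp [Matrix.mul_apply, Matrix.conjTranspose_apply, Fin.sum_univ_three,
        Matrix.vecHead, Matrix.vecTail, hp]
  have hpsd := (h3 _ hM).dotProduct_mulVec_nonneg (![1, -1, 1] : Fin 3 → ℂ)
  simp [Matrix.mulVec, dotProduct, Fin.sum_univ_three, Matrix.map_apply,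
    Matrix.vecHead, Matrix.vecTail] at hpsd
  have hge : ‖p‖ + ‖(1:𝒜)‖ ≤ ‖p + 1‖ := by
    have h0 : ((‖(1:𝒜)‖ + ‖p‖ : ℝ) : ℂ) ≤ ((‖p + 1‖ : ℝ) : ℂ) := by
      push_cast
      exact hpsd
    have := (Complex.real_le_real).mp h0
    linarith
  have heq : ‖p + 1‖ = ‖p‖ + ‖(1:𝒜)‖ :=
    le_antisymm (norm_add_le _ _) hge
  exact hsc p 1 hp0 h1 heq

theorem stmt_14 {𝒜 : Type*} [CStarAlgebra 𝒜]
    (hsc : ∀ X Y : 𝒜, X ≠ 0 → Y ≠ 0 → ‖X + Y‖ = ‖X‖ + ‖Y‖ → ∃ c : ℂ, X = c • Y)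
    (h3 : ∀ M : Matrix (Fin 3) (Fin 3) 𝒜, MatPos M →
      Matrix.PosSemidef (M.map fun a => (‖a‖ : ℂ))) :
    ∀ a : 𝒜, ∃ c : ℂ, a = c • (1 : 𝒜) := by
  intro a
  obtain ⟨c1, hc1⟩ := key_pos hsc h3 a
  obtain ⟨c2, hc2⟩ := key_pos hsc h3 (a + 1)
  obtain ⟨c3, hc3⟩ := key_pos hsc h3 (a + Complex.I • 1)
  have e2 : star a + a = (c2 - c1 - 1) • (1 : 𝒜) := by
    have h : c1 • (1:𝒜) + star a + a + 1 = c2 • 1 := by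
      rw [← hc1, ← hc2]
      noncomm_ring [star_add, star_one]
    have h' : star a + a = c2 • (1:𝒜) - c1 • 1 - 1 := by
      rw [← h]; abel
    rw [sub_smul, sub_smul, one_smul]
    exact h'
  have e3 : star a - a = (-Complex.I * (c3 - c1 - 1)) • (1 : 𝒜) := by
    have h : c1 • (1:𝒜) + Complex.I • star a - Complex.I • a + 1 = c3 • 1 := by
      rw [← hc1, ← hc3]
      simp only [star_add, star_smul, star_one, Complex.star_def, Complex.conj_I,
        add_mul, mul_add, smul_mul_assoc, mul_smul_comm, mul_one, one_mul,
        smul_add, smul_sub, smul_neg, neg_smul, smul_smul, mul_neg, neg_mul, Complex.I_mul_I, neg_neg, one_smul]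
      module
    have h' : Complex.I • (star a - a) = c3 • (1:𝒜) - c1 • 1 - 1 := by
      rw [← h, smul_sub]; abel
    have h'' : star a - a = (-Complex.I) • (Complex.I • (star a - a)) := by
      rw [smul_smul]
      norm_num
    rw [h'', h']
    module
  set r := c2 - c1 - 1
  set s := -Complex.I * (c3 - c1 - 1)
  have h2a : a + a = (r - s) • (1:𝒜) := by
    rw [sub_smul, ← e2, ← e3]; abel
  refine ⟨(r - s)/2, ?_⟩
  have h5 : ((1:ℂ)/2) • (a + a) = ((1:ℂ)/2) • ((r - s) • (1:𝒜)) := by rw [h2a]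
  rw [← two_smul ℂ a, smul_smul, smul_smul] at h5
  norm_num at h5
  rw [h5]
  congr 1
  ring
end

section
/- Every 2n-positive map Φ between C*-algebras belongs to the class S_{mon+}^{(n)}: the entrywise map Φₙ on Mₙ(𝒜) is monotone on positive elements, i.e., [A_{ij}] ≥ [B_{ij}] ≥ 0 in Mₙ(𝒜) implies [Φ(A_{ij})] ≥ [Φ(B_{ij})] in Mₙ(ℬ). -/
open scoped Matrix ComplexOrder WithCStarModule

set_option linter.unusedSectionVars false
/-- synonym for matrices carrying the C*-norm (Mathlib's `CStarMatrix`) -/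
abbrev MatS (n : ℕ) (B : Type*) := CStarMatrix (Fin n) (Fin n) B

noncomputable section
open scoped Matrix

lemma MatS.sum_two_squares {B : Type*} [CStarAlgebra B] [PartialOrder B] [StarOrderedRing B]
    {n : ℕ} (c d : MatS n B) : ∃ b : MatS n B, star b * b = star c * c + star d * d := by
  letI : ContinuousFunctionalCalculus ℝ (MatS n B) IsSelfAdjoint :=
    IsSelfAdjoint.instContinuousFunctionalCalculus
  letI : NonnegSpectrumClass ℝ (MatS n B) := CStarAlgebra.instNonnegSpectrumClass
  have h : (0 : MatS n B) ≤ star c * c + star d * d :=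
    add_nonneg (star_mul_self_nonneg c) (star_mul_self_nonneg d)
  refine ⟨CFC.sqrt (star c * c + star d * d), ?_⟩
  have h1 : IsSelfAdjoint (CFC.sqrt (star c * c + star d * d)) :=
    IsSelfAdjoint.of_nonneg (CFC.sqrt_nonneg _)
  rw [h1.star_eq, CFC.sqrt_mul_sqrt_self _ h]

lemma Matrix.exists_single_square {ℬ : Type*} [CStarAlgebra ℬ] {n : ℕ}
    (c d : Matrix (Fin n) (Fin n) ℬ) :
    ∃ b : Matrix (Fin n) (Fin n) ℬ, bᴴ * b = cᴴ * c + dᴴ * d := by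
  letI : PartialOrder ℬ := CStarAlgebra.spectralOrder ℬ
  haveI : StarOrderedRing ℬ := CStarAlgebra.spectralOrderedRing ℬ
  obtain ⟨b, hb⟩ := MatS.sum_two_squares (n := n) (B := ℬ) c d
  exact ⟨b, hb⟩
end


theorem stmt_15 {𝒜 ℬ : Type*} [CStarAlgebra 𝒜] [CStarAlgebra ℬ] (n : ℕ) (Φ : 𝒜 → ℬ)
    (h2n : ∀ M : Matrix (Fin (2 * n)) (Fin (2 * n)) 𝒜, MatPos M → MatPos (M.map Φ)) :
    ∀ M N : Matrix (Fin n) (Fin n) 𝒜, MatPos N → MatPos (M - N) →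
      MatPos (M.map Φ - N.map Φ) := by
  intro M N hN hMN
  obtain ⟨C, hC⟩ := hN
  obtain ⟨D, hD⟩ := hMN
  -- the index equivalence
  let e : Fin (2 * n) ≃ Fin n ⊕ Fin n := (finCongr (two_mul n)).trans finSumFinEquiv.symm
  -- the big positive matrix
  set P : Matrix (Fin n ⊕ Fin n) (Fin n ⊕ Fin n) 𝒜 := Matrix.fromBlocks M N N N with hP
  have hMeq : Cᴴ * C + Dᴴ * D = M := by
    rw [← hC, ← hD]; abel
  have hM2 : N + Dᴴ * D = M := by rw [← hD]; abel
  have hPpos : MatPos (P.submatrix e e) := by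
    refine ⟨(Matrix.fromBlocks C C D 0).submatrix e e, ?_⟩
    rw [Matrix.conjTranspose_submatrix, Matrix.submatrix_mul_equiv,
      Matrix.fromBlocks_conjTranspose, Matrix.fromBlocks_multiply, hP]
    simp [← hC, hM2]
  obtain ⟨G, hG⟩ := h2n _ hPpos
  -- transfer back to the sum-indexed world
  have hG' : P.map Φ = (G.submatrix e.symm e.symm)ᴴ * (G.submatrix e.symm e.symm) := by
    rw [Matrix.conjTranspose_submatrix, Matrix.submatrix_mul_equiv, ← hG,
      Matrix.submatrix_map]
    ext i j
    simp
  set G' := G.submatrix e.symm e.symm with hG'def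
  have hblocks : Matrix.fromBlocks (M.map Φ) (N.map Φ) (N.map Φ) (N.map Φ) =
      Matrix.fromBlocks (G'.toBlocks₁₁ᴴ * G'.toBlocks₁₁ + G'.toBlocks₂₁ᴴ * G'.toBlocks₂₁)
        (G'.toBlocks₁₁ᴴ * G'.toBlocks₁₂ + G'.toBlocks₂₁ᴴ * G'.toBlocks₂₂)
        (G'.toBlocks₁₂ᴴ * G'.toBlocks₁₁ + G'.toBlocks₂₂ᴴ * G'.toBlocks₂₁)
        (G'.toBlocks₁₂ᴴ * G'.toBlocks₁₂ + G'.toBlocks₂₂ᴴ * G'.toBlocks₂₂) := by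
    rw [← Matrix.fromBlocks_multiply, ← Matrix.fromBlocks_conjTranspose,
      Matrix.fromBlocks_toBlocks, ← hG', hP, Matrix.fromBlocks_map]
  set X := M.map Φ
  set Y := N.map Φ
  set g11 := G'.toBlocks₁₁
  set g12 := G'.toBlocks₁₂
  set g21 := G'.toBlocks₂₁
  set g22 := G'.toBlocks₂₂
  have hX : X = g11ᴴ * g11 + g21ᴴ * g21 := by
    have := congrArg Matrix.toBlocks₁₁ hblocks
    simpa [Matrix.toBlocks_fromBlocks₁₁] using this
  have h12 : Y = g11ᴴ * g12 + g21ᴴ * g22 := by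
    have := congrArg Matrix.toBlocks₁₂ hblocks
    simpa [Matrix.toBlocks_fromBlocks₁₂] using this
  have h21 : Y = g12ᴴ * g11 + g22ᴴ * g21 := by
    have := congrArg Matrix.toBlocks₂₁ hblocks
    simpa [Matrix.toBlocks_fromBlocks₂₁] using this
  have h22 : Y = g12ᴴ * g12 + g22ᴴ * g22 := by
    have := congrArg Matrix.toBlocks₂₂ hblocks
    simpa [Matrix.toBlocks_fromBlocks₂₂] using this
  have key : X - Y = (g11 - g12)ᴴ * (g11 - g12) + (g21 - g22)ᴴ * (g21 - g22) := by
    have expand : (g11 - g12)ᴴ * (g11 - g12) + (g21 - g22)ᴴ * (g21 - g22)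
        = (g11ᴴ * g11 + g21ᴴ * g21) - (g11ᴴ * g12 + g21ᴴ * g22)
          - ((g12ᴴ * g11 + g22ᴴ * g21) - (g12ᴴ * g12 + g22ᴴ * g22)) := by
      simp only [Matrix.conjTranspose_sub, Matrix.sub_mul, Matrix.mul_sub]
      abel
    rw [expand, ← hX, ← h12, ← h21, ← h22]
    abel
  obtain ⟨b, hb⟩ := Matrix.exists_single_square (g11 - g12) (g21 - g22)
  exact ⟨b, by rw [key, hb]⟩
end

section
/- (Strong superadditivity) Let Φ: 𝒜 → ℬ be a positive map in the class S_{mon+}^{(2)}, i.e., the entrywise map Φ₂ on M₂(𝒜) is monotone on positive elements. Then Φ(A+B+C) + Φ(A) ≥ Φ(A+B) + Φ(A+C) for all positive A, B, C ∈ 𝒜. -/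
open scoped Matrix ComplexOrder

lemma key_extract {ℬ : Type*} [CStarAlgebra ℬ] [PartialOrder ℬ] [StarOrderedRing ℬ]
    (D : Matrix (Fin 2) (Fin 2) ℬ) :
    0 ≤ (Dᴴ * D) 0 0 - (Dᴴ * D) 0 1 - (Dᴴ * D) 1 0 + (Dᴴ * D) 1 1 := by
  have h : (Dᴴ * D) 0 0 - (Dᴴ * D) 0 1 - (Dᴴ * D) 1 0 + (Dᴴ * D) 1 1
      = star (D 0 0 - D 0 1) * (D 0 0 - D 0 1) + star (D 1 0 - D 1 1) * (D 1 0 - D 1 1) := by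
    simp [Matrix.mul_apply, Fin.sum_univ_two, Matrix.conjTranspose_apply, star_sub,
      sub_mul, mul_sub]
    abel
  rw [h]
  exact add_nonneg (star_mul_self_nonneg _) (star_mul_self_nonneg _)

theorem stmt_16 {𝒜 ℬ : Type*} [CStarAlgebra 𝒜] [CStarAlgebra ℬ]
    [PartialOrder 𝒜] [StarOrderedRing 𝒜] [PartialOrder ℬ] [StarOrderedRing ℬ] (Φ : 𝒜 → ℬ)
    (hpos : ∀ a : 𝒜, 0 ≤ a → 0 ≤ Φ a)
    (hmon2 : ∀ M N : Matrix (Fin 2) (Fin 2) 𝒜, MatPos N → MatPos (M - N) →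
      MatPos (M.map Φ - N.map Φ)) :
    ∀ A B C : 𝒜, 0 ≤ A → 0 ≤ B → 0 ≤ C →
      Φ (A + B) + Φ (A + C) ≤ Φ (A + B + C) + Φ A := by
  intro A B C hA hB hC
  set sa := CFC.sqrt A with hsa
  set sb := CFC.sqrt B with hsb
  set sc := CFC.sqrt C with hsc
  have hsa2 : sa * sa = A := CFC.sqrt_mul_sqrt_self A hA
  have hsb2 : sb * sb = B := CFC.sqrt_mul_sqrt_self B hB
  have hsc2 : sc * sc = C := CFC.sqrt_mul_sqrt_self C hC
  have hsas : star sa = sa := (IsSelfAdjoint.of_nonneg (CFC.sqrt_nonneg A)).star_eq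
  have hsbs : star sb = sb := (IsSelfAdjoint.of_nonneg (CFC.sqrt_nonneg B)).star_eq
  have hscs : star sc = sc := (IsSelfAdjoint.of_nonneg (CFC.sqrt_nonneg C)).star_eq
  set N : Matrix (Fin 2) (Fin 2) 𝒜 := !![A, A; A, A + C] with hN
  set M : Matrix (Fin 2) (Fin 2) 𝒜 := !![A + B, A + B; A + B, A + B + C] with hM
  have hNpos : MatPos N := by
    refine ⟨!![sa, sa; 0, sc], ?_⟩
    ext i j
    fin_cases i <;> fin_cases j <;>
      simp [hN, Matrix.mul_apply, Fin.sum_univ_two, Matrix.conjTranspose_apply,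
        hsas, hscs, hsa2, hsc2]
  have hMNpos : MatPos (M - N) := by
    refine ⟨!![sb, sb; 0, 0], ?_⟩
    ext i j
    fin_cases i <;> fin_cases j <;>
      simp [hM, hN, Matrix.mul_apply, Fin.sum_univ_two, Matrix.conjTranspose_apply,
        hsbs, hsb2] <;> abel
  obtain ⟨D, hD⟩ := hmon2 M N hNpos hMNpos
  have hkey := key_extract D
  rw [← hD] at hkey
  have h00 : (M.map Φ - N.map Φ) 0 0 = Φ (A + B) - Φ A := by
    simp [hM, hN, Matrix.map_apply]
  have h01 : (M.map Φ - N.map Φ) 0 1 = Φ (A + B) - Φ A := by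
    simp [hM, hN, Matrix.map_apply]
  have h10 : (M.map Φ - N.map Φ) 1 0 = Φ (A + B) - Φ A := by
    simp [hM, hN, Matrix.map_apply]
  have h11 : (M.map Φ - N.map Φ) 1 1 = Φ (A + B + C) - Φ (A + C) := by
    simp [hM, hN, Matrix.map_apply]
  rw [h00, h01, h10, h11] at hkey
  have : 0 ≤ Φ (A + B + C) + Φ A - (Φ (A + B) + Φ (A + C)) := by
    calc 0 ≤ Φ (A + B) - Φ A - (Φ (A + B) - Φ A) - (Φ (A + B) - Φ A)
        + (Φ (A + B + C) - Φ (A + C)) := hkey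
      _ = Φ (A + B + C) + Φ A - (Φ (A + B) + Φ (A + C)) := by abel
  exact sub_nonneg.mp this
end

section
/- (Starshapedness) Let Φ: 𝒜 → ℬ be a continuous positive map in the class S_{mon+}^{(2)}. Then the following are equivalent: (1) Φ(0) = 0; (2) Φ(αA) ≤ αΦ(A) for every α ∈ (0,1] and every positive A; (3) Φ(αA) ≥ αΦ(A) for every α ∈ [1,∞) and every positive A. -/
open scoped Matrix ComplexOrder
set_option maxHeartbeats 1000000

lemma my_exists_sqrt {𝒜 : Type*} [CStarAlgebra 𝒜] [PartialOrder 𝒜] [StarOrderedRing 𝒜]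
    (a : 𝒜) (ha : 0 ≤ a) : ∃ b : 𝒜, a = star b * b :=
  ⟨CFC.sqrt a, by
    rw [(IsSelfAdjoint.of_nonneg (CFC.sqrt_nonneg a)).star_eq, CFC.sqrt_mul_sqrt_self a ha]⟩

lemma my_smul_mono {ℬ : Type*} [CStarAlgebra ℬ] [PartialOrder ℬ] [StarOrderedRing ℬ]
    {r : ℝ} (hr : 0 ≤ r) {x y : ℬ} (h : x ≤ y) : r • x ≤ r • y := by
  rw [← sub_nonneg, ← smul_sub]
  exact smul_nonneg hr (sub_nonneg.2 h)

lemma my_halve {ℬ : Type*} [CStarAlgebra ℬ] [PartialOrder ℬ] [StarOrderedRing ℬ]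
    {x y : ℬ} (h : x + x ≤ y + y) : x ≤ y := by
  rw [← sub_nonneg] at h
  have e : y + y - (x + x) = (2 : ℝ) • (y - x) := by
    rw [two_smul]; abel
  rw [e] at h
  have h2 := smul_nonneg (by norm_num : (0:ℝ) ≤ 1/2) h
  rw [smul_smul] at h2
  norm_num at h2
  exact h2

lemma matpos_quad {ℬ : Type*} [CStarAlgebra ℬ] [PartialOrder ℬ] [StarOrderedRing ℬ]
    {M : Matrix (Fin 2) (Fin 2) ℬ} (h : MatPos M) :
    0 ≤ M 0 0 - M 0 1 - M 1 0 + M 1 1 := by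
  obtain ⟨B, rfl⟩ := h
  have e : ∀ i j, (Bᴴ * B) i j = star (B 0 i) * B 0 j + star (B 1 i) * B 1 j := by
    intro i j
    simp [Matrix.mul_apply, Matrix.conjTranspose_apply, Fin.sum_univ_two]
  simp only [e]
  have key : 0 ≤ star (B 0 0 - B 0 1) * (B 0 0 - B 0 1)
      + star (B 1 0 - B 1 1) * (B 1 0 - B 1 1) :=
    add_nonneg (star_mul_self_nonneg _) (star_mul_self_nonneg _)
  convert key using 1
  simp only [star_sub]
  noncomm_ring

lemma my_ssa {𝒜 ℬ : Type*} [CStarAlgebra 𝒜] [CStarAlgebra ℬ]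
    [PartialOrder 𝒜] [StarOrderedRing 𝒜] [PartialOrder ℬ] [StarOrderedRing ℬ] (Φ : 𝒜 → ℬ)
    (hmon2 : ∀ M N : Matrix (Fin 2) (Fin 2) 𝒜, MatPos N → MatPos (M - N) →
      MatPos (M.map Φ - N.map Φ))
    (A B C : 𝒜) (hA : 0 ≤ A) (hB : 0 ≤ B) (hC : 0 ≤ C) :
    Φ (A + B) + Φ (A + C) ≤ Φ (A + B + C) + Φ A := by
  obtain ⟨a, ha⟩ := my_exists_sqrt A hA
  obtain ⟨b, hb⟩ := my_exists_sqrt B hB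
  obtain ⟨c, hc⟩ := my_exists_sqrt C hC
  have hN : MatPos !![A + B, A; A, A] := by
    refine ⟨!![b, 0; a, a], ?_⟩
    ext i j
    fin_cases i <;> fin_cases j <;>
      simp [Matrix.mul_apply, Matrix.conjTranspose_apply, Fin.sum_univ_two, ha, hb] <;> abel
  have hMN : MatPos (!![A + B + C, A + C; A + C, A + C] - !![A + B, A; A, A]) := by
    refine ⟨!![c, c; 0, 0], ?_⟩
    ext i j
    fin_cases i <;> fin_cases j <;>
      simp [Matrix.sub_apply, Matrix.mul_apply, Matrix.conjTranspose_apply,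
        Fin.sum_univ_two, hc] <;> abel
  have quad := matpos_quad (hmon2 _ _ hN hMN)
  simp [Matrix.sub_apply, Matrix.map_apply] at quad
  rw [← sub_nonneg]
  have e2 : Φ (A + B + C) + Φ A - (Φ (A + B) + Φ (A + C))
      = (Φ (A + B + C) - Φ (A + B) + Φ A) - Φ (A + C) := by abel
  rw [e2]
  exact sub_nonneg.2 quad

theorem stmt_17 {𝒜 ℬ : Type*} [CStarAlgebra 𝒜] [CStarAlgebra ℬ]
    [PartialOrder 𝒜] [StarOrderedRing 𝒜] [PartialOrder ℬ] [StarOrderedRing ℬ] (Φ : 𝒜 → ℬ)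
    (hcont : Continuous Φ) (hpos : ∀ a : 𝒜, 0 ≤ a → 0 ≤ Φ a)
    (hmon2 : ∀ M N : Matrix (Fin 2) (Fin 2) 𝒜, MatPos N → MatPos (M - N) →
      MatPos (M.map Φ - N.map Φ)) :
    (Φ 0 = 0 ↔ ∀ α : ℝ, α ∈ Set.Ioc (0 : ℝ) 1 → ∀ A : 𝒜, 0 ≤ A → Φ (α • A) ≤ α • Φ A) ∧
      (Φ 0 = 0 ↔ ∀ α : ℝ, 1 ≤ α → ∀ A : 𝒜, 0 ≤ A → α • Φ A ≤ Φ (α • A)) := by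
  -- midpoint property, from strong superadditivity
  have mid : ∀ A : 𝒜, 0 ≤ A → ∀ α β : ℝ, 0 ≤ β → β ≤ α →
      Φ (α • A) ≤ α • Φ A → Φ (β • A) ≤ β • Φ A →
      Φ (((α + β) / 2) • A) ≤ ((α + β) / 2) • Φ A := by
    intro A hA α β hβ hβα h1 h2
    have hδ : (0:ℝ) ≤ (α - β) / 2 := by linarith
    have hssa := my_ssa Φ hmon2 (β • A) (((α - β)/2) • A) (((α - β)/2) • A)
      (smul_nonneg hβ hA) (smul_nonneg hδ hA) (smul_nonneg hδ hA)
    have e1 : β • A + ((α - β)/2) • A = ((α + β)/2) • A := by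
      rw [← add_smul]; congr 1; ring
    have e2 : β • A + ((α - β)/2) • A + ((α - β)/2) • A = α • A := by
      rw [← add_smul, ← add_smul]; congr 1; ring
    rw [e2, e1] at hssa
    refine my_halve (le_trans hssa ?_)
    have e3 : ((α + β)/2) • Φ A + ((α + β)/2) • Φ A = α • Φ A + β • Φ A := by
      rw [← add_smul, ← add_smul]; congr 1; ring
    rw [e3]
    exact add_le_add h1 h2
  -- main implication (1) → star-shaped on [0,1]
  have main : Φ 0 = 0 → ∀ α : ℝ, α ∈ Set.Icc (0:ℝ) 1 → ∀ A : 𝒜, 0 ≤ A →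
      Φ (α • A) ≤ α • Φ A := by
    intro h0 α hα A hA
    have dyadic : ∀ n k : ℕ, k ≤ 2 ^ n →
        Φ (((k : ℝ) / 2 ^ n) • A) ≤ ((k : ℝ) / 2 ^ n) • Φ A := by
      intro n
      induction n with
      | zero =>
        intro k hk
        interval_cases k
        · simp [h0]
        · simp
      | succ n ih =>
        intro k hk
        have h2n : (2:ℕ) ^ (n + 1) = 2 ^ n + 2 ^ n := by ring
        have ha : (k + 1) / 2 ≤ 2 ^ n := by omega
        have hb : k / 2 ≤ 2 ^ n := by omega
        have hab : (k + 1) / 2 + k / 2 = k := by omega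
        have hba : ((k / 2 : ℕ) : ℝ) / 2 ^ n ≤ (((k + 1) / 2 : ℕ) : ℝ) / 2 ^ n := by
          have hnat : ((k / 2 : ℕ) : ℝ) ≤ (((k + 1) / 2 : ℕ) : ℝ) := by
            exact_mod_cast Nat.div_le_div_right (Nat.le_succ k)
          gcongr
        have key := mid A hA ((((k + 1) / 2 : ℕ) : ℝ) / 2 ^ n) (((k / 2 : ℕ) : ℝ) / 2 ^ n)
          (by positivity) hba (ih _ ha) (ih _ hb)
        have hk' : ((((k + 1) / 2 : ℕ) : ℝ) + ((k / 2 : ℕ) : ℝ)) = (k : ℝ) := by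
          exact_mod_cast hab
        have e : ((((k + 1) / 2 : ℕ) : ℝ) / 2 ^ n + ((k / 2 : ℕ) : ℝ) / 2 ^ n) / 2
            = (k : ℝ) / 2 ^ (n + 1) := by
          rw [← add_div, hk', div_div, ← pow_succ]
        rwa [e] at key
    -- closed set of good parameters
    have hC : IsClosed {t : ℝ | Φ (t • A) ≤ t • Φ A} :=
      isClosed_le (hcont.comp (continuous_id.smul continuous_const))
        (continuous_id.smul continuous_const)
    have htd : Filter.Tendsto
        (fun n : ℕ => ((⌊α * (2:ℝ) ^ n⌋₊ : ℝ) / (2:ℝ) ^ n))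
        Filter.atTop (nhds α) :=
      (tendsto_nat_floor_mul_div_atTop hα.1).comp
        (tendsto_pow_atTop_atTop_of_one_lt one_lt_two)
    refine hC.mem_of_tendsto htd (Filter.Eventually.of_forall fun n => ?_)
    have hfl : ⌊α * (2:ℝ) ^ n⌋₊ ≤ 2 ^ n := by
      have hcast : ((2:ℝ)) ^ n = (((2:ℕ) ^ n : ℕ) : ℝ) := by push_cast; ring
      have h1 : α * (2:ℝ) ^ n ≤ (((2:ℕ) ^ n : ℕ) : ℝ) := by
        rw [← hcast]
        nlinarith [pow_pos (by norm_num : (0:ℝ) < 2) n, hα.1, hα.2]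
      calc ⌊α * (2:ℝ) ^ n⌋₊ ≤ ⌊(((2:ℕ) ^ n : ℕ) : ℝ)⌋₊ := Nat.floor_le_floor h1
        _ = 2 ^ n := Nat.floor_natCast _
    exact dyadic n _ hfl
  constructor
  · constructor
    · intro h0 α hα A hA
      exact main h0 α ⟨hα.1.le, hα.2⟩ A hA
    · intro h
      have h1 := h (1/2) (by norm_num) 0 le_rfl
      rw [smul_zero] at h1
      have h2 : (0:ℬ) ≤ Φ 0 := hpos 0 le_rfl
      have h3 : ((1:ℝ)/2) • Φ 0 ≤ 0 := by
        have e : Φ 0 - ((1:ℝ)/2) • Φ 0 = ((1:ℝ)/2) • Φ 0 := by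
          nth_rewrite 1 [← one_smul ℝ (Φ 0)]
          rw [← sub_smul]; norm_num
        calc ((1:ℝ)/2) • Φ 0 = Φ 0 - ((1:ℝ)/2) • Φ 0 := e.symm
          _ ≤ 0 := sub_nonpos.2 h1
      have h4 : ((1:ℝ)/2) • Φ 0 = 0 := le_antisymm h3 (smul_nonneg (by norm_num) h2)
      have h5 : Φ 0 = (2:ℝ) • (((1:ℝ)/2) • Φ 0) := by
        rw [smul_smul]; norm_num
      rw [h5, h4, smul_zero]
  · constructor
    · intro h0 α hα A hA
      rcases eq_or_lt_of_le hα with heq | hlt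
      · rw [← heq, one_smul, one_smul]
      · have hα0 : α ≠ 0 := by linarith
        have hinv : (1/α) ∈ Set.Icc (0:ℝ) 1 :=
          ⟨by positivity, by rw [div_le_one (by linarith)]; linarith⟩
        have h2 := main h0 (1/α) hinv (α • A) (smul_nonneg (by linarith) hA)
        rw [smul_smul, one_div_mul_cancel hα0, one_smul] at h2
        have h3 := my_smul_mono (by linarith : (0:ℝ) ≤ α) h2
        rwa [smul_smul, mul_one_div, div_self hα0, one_smul] at h3
    · intro h
      have h1 := h 2 (by norm_num) 0 le_rfl
      rw [smul_zero] at h1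
      have h2 : (0:ℬ) ≤ Φ 0 := hpos 0 le_rfl
      have h3 : Φ 0 ≤ 0 := by
        have e : (2:ℝ) • Φ 0 - Φ 0 = Φ 0 := by
          nth_rewrite 2 [← one_smul ℝ (Φ 0)]
          rw [← sub_smul]; norm_num
        calc Φ 0 = (2:ℝ) • Φ 0 - Φ 0 := e.symm
          _ ≤ 0 := sub_nonpos.2 h1
      exact le_antisymm h3 h2
end

section
/- Let Φ: 𝒜 → ℬ be a continuous unital 3-positive map between unital C*-algebras in the class S_{mon+}^{(2)} with Φ(0) = 0. If Φ(αI) = αI for some α in the closed unit disc of ℂ or some α ∈ ℝ₊, then Φ(αA) = αΦ(A) for every A ∈ 𝒜. -/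
open scoped Matrix ComplexOrder

namespace Stmt18

open Matrix Complex Finset

set_option linter.unusedSectionVars false

section Infra

variable {𝒜 : Type*} [CStarAlgebra 𝒜] [PartialOrder 𝒜] [StarOrderedRing 𝒜]

lemma matpos_pairing {n : ℕ} {M : Matrix (Fin n) (Fin n) 𝒜} (h : MatPos M) :
    ∃ w : (Fin n → 𝒜) → (Fin n → 𝒜),
      ∀ v u : Fin n → 𝒜,
        ∑ i, ∑ j, star (v i) * M i j * u j = ∑ k, star (w v k) * w u k := by
  obtain ⟨B, rfl⟩ := h
  refine ⟨fun x k => ∑ i, B k i * x i, fun v u => ?_⟩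
  have h1 : ∀ i j : Fin n, star (v i) * (Bᴴ * B) i j * u j
      = ∑ k, star (v i) * star (B k i) * (B k j * u j) := by
    intro i j
    rw [Matrix.mul_apply]
    simp only [Matrix.conjTranspose_apply, Finset.mul_sum, Finset.sum_mul]
    exact Finset.sum_congr rfl fun k _ => by simp only [mul_assoc]
  calc ∑ i, ∑ j, star (v i) * (Bᴴ * B) i j * u j
      = ∑ i, ∑ j, ∑ k, star (v i) * star (B k i) * (B k j * u j) :=
        Finset.sum_congr rfl fun i _ => Finset.sum_congr rfl fun j _ => h1 i j
    _ = ∑ i, ∑ k, ∑ j, star (v i) * star (B k i) * (B k j * u j) :=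
        Finset.sum_congr rfl fun i _ => Finset.sum_comm
    _ = ∑ k, ∑ i, ∑ j, star (v i) * star (B k i) * (B k j * u j) := Finset.sum_comm
    _ = ∑ k, star (∑ i, B k i * v i) * ∑ j, B k j * u j := by
        refine Finset.sum_congr rfl fun k _ => ?_
        rw [star_sum, Finset.sum_mul]
        refine Finset.sum_congr rfl fun i _ => ?_
        rw [StarMul.star_mul, Finset.mul_sum]

lemma matpos_quadform {n : ℕ} {M : Matrix (Fin n) (Fin n) 𝒜} (h : MatPos M)
    (v : Fin n → 𝒜) : 0 ≤ ∑ i, ∑ j, star (v i) * M i j * v j := by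
  obtain ⟨w, hw⟩ := matpos_pairing h
  rw [hw v v]
  exact Finset.sum_nonneg fun k _ => star_mul_self_nonneg _

lemma matpos_null {n : ℕ} {M : Matrix (Fin n) (Fin n) 𝒜} (h : MatPos M)
    {v : Fin n → 𝒜} (hv : ∑ i, ∑ j, star (v i) * M i j * v j = 0) (u : Fin n → 𝒜) :
    ∑ i, ∑ j, star (v i) * M i j * u j = 0 := by
  obtain ⟨w, hw⟩ := matpos_pairing h
  have hz : ∀ k, w v k = 0 := by
    intro k
    have h0 : ∀ k ∈ (univ : Finset (Fin n)), 0 ≤ star (w v k) * w v k :=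
      fun k _ => star_mul_self_nonneg _
    have := (Finset.sum_eq_zero_iff_of_nonneg h0).mp (by rw [← hw v v]; exact hv) k (mem_univ k)
    exact (CStarRing.star_mul_self_eq_zero_iff _).mp this
  rw [hw v u]
  exact Finset.sum_eq_zero fun k _ => by rw [hz k, star_zero, zero_mul]

lemma matpos_herm {n : ℕ} {M : Matrix (Fin n) (Fin n) 𝒜} (h : MatPos M) : Mᴴ = M := by
  obtain ⟨B, rfl⟩ := h
  rw [conjTranspose_mul, conjTranspose_conjTranspose]

lemma matpos_entry_nonneg {n : ℕ} {M : Matrix (Fin n) (Fin n) 𝒜} (h : MatPos M) (i : Fin n) :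
    0 ≤ M i i := by
  have := matpos_quadform h (fun j => if j = i then 1 else 0)
  simpa [apply_ite, ite_mul, mul_ite, Finset.sum_ite_eq, Finset.sum_ite_eq'] using this

lemma gram2 (a b : 𝒜) :
    MatPos (Matrix.of ![![star a * a, star a * b], ![star b * a, star b * b]]) := by
  refine ⟨Matrix.of ![![a, b], ![0, 0]], ?_⟩
  ext i j
  rw [Matrix.mul_apply, Fin.sum_univ_two]
  simp only [Matrix.conjTranspose_apply, Matrix.of_apply]
  fin_cases i <;> fin_cases j <;> simp [Matrix.vecHead, Matrix.vecTail]

set_option maxHeartbeats 1000000 in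
lemma gram3 (a b c : 𝒜) :
    MatPos (Matrix.of ![![star a * a, star a * b, star a * c],
      ![star b * a, star b * b, star b * c],
      ![star c * a, star c * b, star c * c]]) := by
  refine ⟨Matrix.of ![![a, b, c], ![0, 0, 0], ![0, 0, 0]], ?_⟩
  ext i j
  rw [Matrix.mul_apply, Fin.sum_univ_three]
  simp only [Matrix.conjTranspose_apply, Matrix.of_apply]
  fin_cases i <;> fin_cases j <;> simp [Matrix.vecHead, Matrix.vecTail]

lemma matpos_smul {n : ℕ} {M : Matrix (Fin n) (Fin n) 𝒜} (h : MatPos M) {c : ℝ}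
    (hc : 0 ≤ c) : MatPos (((c : ℝ) : ℂ) • M) := by
  obtain ⟨B, rfl⟩ := h
  refine ⟨((Real.sqrt c : ℝ) : ℂ) • B, ?_⟩
  rw [Matrix.conjTranspose_smul, Matrix.smul_mul, Matrix.mul_smul, smul_smul]
  congr 1
  rw [Complex.star_def, Complex.conj_ofReal, ← Complex.ofReal_mul, Real.mul_self_sqrt hc]

lemma ofreal_smul_nonneg {c : ℝ} (hc : 0 ≤ c) {p : 𝒜} (hp : 0 ≤ p) :
    0 ≤ (c : ℂ) • p := by
  have h := star_left_conjugate_nonneg hp ((Real.sqrt c : ℂ) • (1 : 𝒜))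
  have e : star ((Real.sqrt c : ℂ) • (1 : 𝒜)) * p * ((Real.sqrt c : ℂ) • (1 : 𝒜))
      = (c : ℂ) • p := by
    simp [star_smul, Complex.star_def, Complex.conj_ofReal, smul_mul_assoc, mul_smul_comm,
      smul_smul, ← Complex.ofReal_mul, Real.mul_self_sqrt hc]
  rwa [e] at h

lemma ofreal_smul_mono {c : ℝ} (hc : 0 ≤ c) {p q : 𝒜} (h : p ≤ q) :
    (c : ℂ) • p ≤ (c : ℂ) • q := by
  have h2 := ofreal_smul_nonneg hc (sub_nonneg.2 h)
  rw [smul_sub] at h2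
  exact sub_nonneg.1 h2

lemma le_norm_smul_one {a : 𝒜} (ha : 0 ≤ a) : a ≤ ((‖a‖ : ℝ) : ℂ) • 1 := by
  have h := IsSelfAdjoint.le_algebraMap_norm_self (a := a) (IsSelfAdjoint.of_nonneg ha)
  rwa [Algebra.algebraMap_eq_smul_one, ← algebraMap_smul ℂ ‖a‖ (1 : 𝒜),
    Complex.coe_algebraMap] at h

lemma norm_le_of_le_smul {a : 𝒜} {c : ℝ} (ha : 0 ≤ a) (hc : 0 ≤ c)
    (h : a ≤ (c : ℂ) • 1) : ‖a‖ ≤ c := by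
  have e0 : ‖(1 : 𝒜)‖ * ‖(1 : 𝒜)‖ = ‖(1 : 𝒜)‖ := by
    simpa using (CStarRing.norm_star_mul_self (x := (1 : 𝒜))).symm
  have h1 : ‖(1 : 𝒜)‖ ≤ 1 := by nlinarith [norm_nonneg (1 : 𝒜)]
  calc ‖a‖ ≤ ‖(c : ℂ) • (1 : 𝒜)‖ := CStarAlgebra.norm_le_norm_of_nonneg_of_le ha h
    _ = c * ‖(1 : 𝒜)‖ := by
        rw [norm_smul, Complex.norm_real, Real.norm_eq_abs, _root_.abs_of_nonneg hc]
    _ ≤ c := by nlinarith [mul_le_mul_of_nonneg_left h1 hc]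

lemma corner_unit {D : Matrix (Fin 2) (Fin 2) 𝒜} (h : MatPos D) {x : 𝒜}
    (h01 : D 0 1 = x) (h10 : D 1 0 = star x) (h11 : D 1 1 = 1) :
    x * star x ≤ D 0 0 := by
  have q := matpos_quadform h ![(1 : 𝒜), -star x]
  simp only [Fin.sum_univ_two, Matrix.cons_val_zero, Matrix.cons_val_one, Matrix.head_cons,
    h01, h10, h11, star_neg, star_star, star_one, one_mul, mul_one, mul_neg, neg_mul] at q
  have q' : 0 ≤ D 0 0 - x * star x := by convert q using 1; abel
  exact sub_nonneg.1 q'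

lemma corner_norm {D : Matrix (Fin 2) (Fin 2) 𝒜} (h : MatPos D) :
    ‖D 0 1‖ ^ 2 ≤ ‖D 1 1‖ * ‖D 0 0‖ := by
  have hh := matpos_herm h
  set x := D 0 1 with hx
  have h10 : D 1 0 = star x := by
    have := congrFun (congrFun hh 1) 0
    simpa [Matrix.conjTranspose_apply] using this.symm
  have h00 : 0 ≤ D 0 0 := matpos_entry_nonneg h 0
  have h11 : 0 ≤ D 1 1 := matpos_entry_nonneg h 1
  set r := ‖D 1 1‖ with hrdef
  have hr0 : 0 ≤ r := norm_nonneg _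
  have hxx : 0 ≤ x * star x := mul_star_self_nonneg x
  have key : ∀ lam : ℝ, 0 ≤ lam →
      ((lam + lam : ℝ) : ℂ) • (x * star x) ≤ D 0 0 + ((lam * lam * r : ℝ) : ℂ) • (x * star x) := by
    intro lam hlam
    have q := matpos_quadform h ![(1 : 𝒜), -(((lam : ℝ) : ℂ) • star x)]
    simp only [Fin.sum_univ_two, Matrix.cons_val_zero, Matrix.cons_val_one, Matrix.head_cons,
      h10, star_neg, star_smul, star_star, star_one, one_mul, mul_one, mul_neg, neg_mul,
      smul_neg, neg_neg, Complex.star_def, Complex.conj_ofReal, smul_mul_assoc,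
      mul_smul_comm, ← hx] at q
    have hcb : x * D 1 1 * star x ≤ ((r : ℝ) : ℂ) • (x * star x) := by
      have h5 := star_left_conjugate_le_conjugate (le_norm_smul_one h11) (star x)
      rwa [star_star, show x * (((r : ℝ) : ℂ) • (1 : 𝒜)) * star x = ((r : ℝ) : ℂ) • (x * star x)
        by rw [mul_smul_comm, mul_one, smul_mul_assoc]] at h5
    have hcb2 : ((lam : ℝ) : ℂ) • ((lam : ℝ) : ℂ) • (x * D 1 1 * star x)
        ≤ ((lam * lam * r : ℝ) : ℂ) • (x * star x) := by
      have h6 := ofreal_smul_mono (mul_self_nonneg lam) hcb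
      rw [smul_smul, ← Complex.ofReal_mul] at h6
      rw [smul_smul, ← Complex.ofReal_mul]
      exact h6
    have q2 : (0 : 𝒜) ≤ D 0 0 + -(((lam : ℝ) : ℂ) • (x * star x)) +
        (-(((lam : ℝ) : ℂ) • (x * star x)) + ((lam * lam * r : ℝ) : ℂ) • (x * star x)) :=
      le_trans q (by exact add_le_add le_rfl (add_le_add le_rfl hcb2))
    have q3 : (0 : 𝒜) ≤ (D 0 0 + ((lam * lam * r : ℝ) : ℂ) • (x * star x)) -
        ((lam + lam : ℝ) : ℂ) • (x * star x) := by
      refine le_of_le_of_eq q2 ?_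
      push_cast
      module
    exact sub_nonneg.1 q3
  rcases eq_or_lt_of_le hr0 with hr | hr
  · have hxn : ‖x * star x‖ = 0 := by
      by_contra hne
      have hpos : 0 < ‖x * star x‖ := lt_of_le_of_ne (norm_nonneg _) (Ne.symm hne)
      set lam := (‖D 0 0‖ + 1) / (2 * ‖x * star x‖) with hlam
      have hlampos : 0 < lam := by positivity
      have k := key lam hlampos.le
      rw [← hr] at k
      simp only [mul_zero, zero_mul, Complex.ofReal_zero, zero_smul, add_zero] at k
      have hnle := CStarAlgebra.norm_le_norm_of_nonneg_of_le
        (ofreal_smul_nonneg (by positivity) hxx) k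
      rw [norm_smul, Complex.norm_real, Real.norm_eq_abs,
        _root_.abs_of_nonneg (by positivity : (0:ℝ) ≤ lam + lam)] at hnle
      have heq2 : (lam + lam) * ‖x * star x‖ = ‖D 0 0‖ + 1 := by
        rw [hlam]; field_simp; ring
      nlinarith
    have : ‖x‖ * ‖x‖ = 0 := by rw [← CStarRing.norm_self_mul_star]; exact hxn
    nlinarith [norm_nonneg (D 0 0), sq_nonneg ‖x‖]
  · have k := key r⁻¹ (by positivity)
    have k2 : x * star x ≤ ((r : ℝ) : ℂ) • D 0 0 := by
      have h7 := ofreal_smul_mono hr0 k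
      rw [smul_add, smul_smul, smul_smul, ← Complex.ofReal_mul, ← Complex.ofReal_mul] at h7
      have e1 : (r * (r⁻¹ + r⁻¹) : ℝ) = 2 := by field_simp; norm_num
      have e2 : (r * (r⁻¹ * r⁻¹ * r) : ℝ) = 1 := by field_simp
      rw [e1, e2] at h7
      simp only [Complex.ofReal_one, one_smul] at h7
      have h8 : ((2:ℝ):ℂ) • (x * star x) = x * star x + x * star x := by
        push_cast; rw [two_smul]
      rw [h8] at h7
      exact le_of_add_le_add_right h7
    have hnle := CStarAlgebra.norm_le_norm_of_nonneg_of_le hxx k2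
    rw [norm_smul, Complex.norm_real, Real.norm_eq_abs, _root_.abs_of_nonneg hr0] at hnle
    calc ‖x‖ ^ 2 = ‖x * star x‖ := by rw [CStarRing.norm_self_mul_star]; ring
      _ ≤ r * ‖D 0 0‖ := hnle

end Infra

lemma interp {φ : ℝ → ℝ} (hc : Continuous φ) (h1 : φ 1 = 1) (hnn : ∀ s, 0 ≤ φ s)
    (hgm : ∀ u v : ℝ, 0 ≤ u → 0 ≤ v → φ (Real.sqrt (u * v)) ^ 2 ≤ φ u * φ v)
    {w t : ℝ} (hw0 : 0 < w) (hwt : w < t) (ht1 : t < 1) (hφw : φ w ≤ w) :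
    φ t ≤ t := by
  have hw1 : w < 1 := hwt.trans ht1
  have ht0 : 0 < t := hw0.trans hwt
  set L := Real.log w with hL
  have hLneg : L < 0 := Real.log_neg hw0 hw1
  have hLne : L ≠ 0 := ne_of_lt hLneg
  set E : ℝ → ℝ := fun l => Real.exp (L * l) with hE
  have hEpos : ∀ l, 0 < E l := fun l => Real.exp_pos _
  have hE0 : E 0 = 1 := by simp [hE]
  have hE1 : E 1 = w := by simp [hE, hL, Real.exp_log hw0]
  have hEmid : ∀ a b : ℝ, Real.sqrt (E a * E b) = E ((a + b) / 2) := by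
    intro a b
    have h2 : E a * E b = (E ((a + b) / 2)) ^ 2 := by
      simp only [hE, sq, ← Real.exp_add]
      ring_nf
    rw [h2, Real.sqrt_sq (hEpos _).le]
  have dyadic : ∀ n : ℕ, ∀ j : ℕ, j ≤ 2 ^ n →
      φ (E ((j : ℝ) / 2 ^ n)) ≤ E ((j : ℝ) / 2 ^ n) := by
    intro n
    induction n with
    | zero =>
      intro j hj
      interval_cases j
      · simpa [hE0] using le_of_eq h1
      · simpa [hE1] using hφw
    | succ n ih =>
      intro j hj
      rcases Nat.even_or_odd j with ⟨m, hm⟩ | ⟨m, hm⟩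
      · subst hm
        have hm2 : m ≤ 2 ^ n := by
          have : 2 ^ (n+1) = 2 * 2 ^ n := by ring
          omega
        have harg : ((m + m : ℕ) : ℝ) / 2 ^ (n+1) = (m : ℝ) / 2 ^ n := by
          push_cast
          field_simp
          ring
        rw [harg]
        exact ih m hm2
      · subst hm
        have hm1 : m + 1 ≤ 2 ^ n := by
          have : 2 ^ (n+1) = 2 * 2 ^ n := by ring
          omega
        have l₁ := ih m (by omega)
        have l₂ := ih (m + 1) hm1
        have hmid : ((2 * m + 1 : ℕ) : ℝ) / 2 ^ (n+1)
            = (((m : ℝ) / 2 ^ n) + (((m + 1 : ℕ) : ℝ) / 2 ^ n)) / 2 := by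
          push_cast
          field_simp
          ring
        have hgm' := hgm (E ((m : ℝ) / 2 ^ n)) (E (((m + 1 : ℕ) : ℝ) / 2 ^ n))
          (hEpos _).le (hEpos _).le
        rw [hEmid] at hgm'
        have hprod : φ (E ((((m : ℝ) / 2 ^ n) + (((m + 1 : ℕ) : ℝ) / 2 ^ n)) / 2)) ^ 2
            ≤ E ((((m : ℝ) / 2 ^ n) + (((m + 1 : ℕ) : ℝ) / 2 ^ n)) / 2) ^ 2 := by
          have hEE : E ((m : ℝ) / 2 ^ n) * E (((m + 1 : ℕ) : ℝ) / 2 ^ n)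
              = E ((((m : ℝ) / 2 ^ n) + (((m + 1 : ℕ) : ℝ) / 2 ^ n)) / 2) ^ 2 := by
            rw [← hEmid, Real.sq_sqrt (by positivity)]
          calc φ _ ^ 2 ≤ _ := hgm'
            _ ≤ E ((m : ℝ) / 2 ^ n) * E (((m + 1 : ℕ) : ℝ) / 2 ^ n) :=
              mul_le_mul l₁ l₂ (hnn _) (hEpos _).le
            _ = _ := hEE
        have hfin : φ (E ((((m : ℝ) / 2 ^ n) + (((m + 1 : ℕ) : ℝ) / 2 ^ n)) / 2))
            ≤ E ((((m : ℝ) / 2 ^ n) + (((m + 1 : ℕ) : ℝ) / 2 ^ n)) / 2) := by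
          have ha := hnn (E ((((m : ℝ) / 2 ^ n) + (((m + 1 : ℕ) : ℝ) / 2 ^ n)) / 2))
          nlinarith [hEpos ((((m : ℝ) / 2 ^ n) + (((m + 1 : ℕ) : ℝ) / 2 ^ n)) / 2)]
        rw [hmid]
        exact hfin
  set lam := Real.log t / L with hlam
  have hlt : L < Real.log t := Real.log_lt_log hw0 hwt
  have hltneg : Real.log t < 0 := Real.log_neg ht0 ht1
  have hlam0 : 0 < lam := div_pos_of_neg_of_neg hltneg hLneg
  have hlam1 : lam < 1 := by
    have h9 : (Real.log t - L) / L < 0 := div_neg_of_pos_of_neg (by linarith) hLneg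
    have h10 : lam - 1 = (Real.log t - L) / L := by
      rw [hlam]
      field_simp
    linarith
  have hElam : E lam = t := by
    rw [hE]
    simp only [hlam]
    rw [mul_div_cancel₀ _ hLne]
    exact Real.exp_log ht0
  set l : ℕ → ℝ := fun n => ((⌊lam * 2 ^ n⌋₊ : ℕ) : ℝ) / 2 ^ n with hl
  have hjle : ∀ n : ℕ, ⌊lam * 2 ^ n⌋₊ ≤ 2 ^ n := by
    intro n
    have h15 : lam * 2 ^ n < 2 ^ n := by
      have := mul_lt_mul_of_pos_right hlam1 (by positivity : (0:ℝ) < 2 ^ n)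
      simpa using this
    have h11 : ⌊lam * 2 ^ n⌋₊ < 2 ^ n := by
      rw [Nat.floor_lt (by positivity)]
      push_cast
      exact h15
    exact h11.le
  have hub : ∀ n, l n ≤ lam := by
    intro n
    rw [hl]
    rw [div_le_iff₀ (by positivity : (0:ℝ) < 2 ^ n)]
    exact Nat.floor_le (by positivity)
  have hlb : ∀ n, lam - (1/2) ^ n ≤ l n := by
    intro n
    have h2n : (0:ℝ) < 2 ^ n := by positivity
    have h12 : lam * 2 ^ n < (⌊lam * 2 ^ n⌋₊ : ℝ) + 1 := Nat.lt_floor_add_one _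
    have h13 : lam ≤ ((⌊lam * 2 ^ n⌋₊ : ℝ) + 1) / 2 ^ n := by
      rw [le_div_iff₀ h2n]; linarith
    have h14 : ((⌊lam * 2 ^ n⌋₊ : ℝ) + 1) / 2 ^ n - (1/2) ^ n = l n := by
      rw [hl]; field_simp
      rw [← mul_pow]; norm_num
    linarith
  have htend : Filter.Tendsto l Filter.atTop (nhds lam) := by
    have h13 : Filter.Tendsto (fun n : ℕ => lam - (1/2:ℝ) ^ n) Filter.atTop (nhds lam) := by
      have h14 := tendsto_pow_atTop_nhds_zero_of_lt_one (by norm_num : (0:ℝ) ≤ 1/2)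
        (by norm_num : (1/2:ℝ) < 1)
      simpa using Filter.Tendsto.const_sub lam h14
    exact tendsto_of_tendsto_of_tendsto_of_le_of_le h13 tendsto_const_nhds hlb hub
  have hEcont : Continuous E := by
    rw [hE]; fun_prop
  have t1 : Filter.Tendsto (fun n => φ (E (l n))) Filter.atTop (nhds (φ (E lam))) :=
    ((hc.comp hEcont).tendsto lam).comp htend
  have t2 : Filter.Tendsto (fun n => E (l n)) Filter.atTop (nhds (E lam)) :=
    (hEcont.tendsto lam).comp htend
  have hfin := le_of_tendsto_of_tendsto' t1 t2 (fun n => dyadic n _ (hjle n))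
  rwa [hElam] at hfin

section Core

variable {𝒜 ℬ : Type*} [CStarAlgebra 𝒜] [CStarAlgebra ℬ]
    [PartialOrder 𝒜] [StarOrderedRing 𝒜] [PartialOrder ℬ] [StarOrderedRing ℬ]

set_option maxHeartbeats 3000000 in
lemma core (Φ : 𝒜 → ℬ)
    (hcont : Continuous Φ) (hu : Φ 1 = 1) (h0 : Φ 0 = 0)
    (h3 : ∀ M : Matrix (Fin 3) (Fin 3) 𝒜, MatPos M → MatPos (M.map Φ))
    (hmon2 : ∀ M N : Matrix (Fin 2) (Fin 2) 𝒜, MatPos N → MatPos (M - N) →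
      MatPos (M.map Φ - N.map Φ))
    (α : ℂ) (hle : ‖α‖ ≤ 1)
    (heq : Φ (α • (1 : 𝒜)) = α • (1 : ℬ)) :
    ∀ A : 𝒜, Φ (α • A) = α • Φ A := by
  by_cases hα0 : α = 0
  · intro A; subst hα0; rw [zero_smul, h0, zero_smul]
  rcases subsingleton_or_nontrivial ℬ with hB | hB
  · intro A; exact Subsingleton.elim _ _
  -- Φ₂ positivity
  have pos2 : ∀ M : Matrix (Fin 2) (Fin 2) 𝒜, MatPos M → MatPos (M.map Φ) := by
    intro M hM
    have hz : (0 : Matrix (Fin 2) (Fin 2) 𝒜).map Φ = 0 := by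
      ext i j; simp [Matrix.map_apply, h0]
    have h := hmon2 M 0 ⟨0, by simp⟩ (by simpa using hM)
    rwa [hz, sub_zero] at h
  -- star preservation
  have herm : ∀ x : 𝒜, Φ (star x) = star (Φ x) := by
    intro x
    have hP := matpos_herm (h3 _ (gram3 (1 : 𝒜) x 0))
    have h2 := congrFun (congrFun hP 1) 0
    have h2' : star (Φ x) = Φ (star x) := by
      simpa [Matrix.conjTranspose_apply, Matrix.map_apply] using h2
    exact h2'.symm
  -- scalar values are nonneg
  have snn : ∀ s : ℝ, 0 ≤ s → 0 ≤ Φ ((s : ℂ) • 1) := by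
    intro s hs
    have hP := pos2 _ (gram2 (((Real.sqrt s : ℝ) : ℂ) • (1 : 𝒜)) 0)
    have h2 := matpos_entry_nonneg hP 0
    simpa [Matrix.map_apply, star_smul, Complex.star_def, Complex.conj_ofReal,
      smul_mul_assoc, mul_smul_comm, smul_smul, ← Complex.ofReal_mul,
      Real.mul_self_sqrt hs] using h2
  set cα := (starRingEnd ℂ) α with hcα
  have hΦca : Φ (cα • 1) = cα • (1 : ℬ) := by
    have e : cα • (1 : 𝒜) = star (α • (1 : 𝒜)) := by
      rw [star_smul, star_one, Complex.star_def]
    rw [e, herm, heq, star_smul, star_one, Complex.star_def]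
  set tR := Complex.normSq α with htR
  have htpos : 0 < tR := Complex.normSq_pos.2 hα0
  have ht1 : tR ≤ 1 := by
    rw [htR, ← Complex.sq_norm]
    nlinarith [norm_nonneg α]
  have hmulconj : α * cα = ((tR : ℝ) : ℂ) := by
    rw [hcα, htR]; exact Complex.mul_conj α
  have hmulconj' : cα * α = ((tR : ℝ) : ℂ) := by rw [mul_comm]; exact hmulconj
  have hconjca : (starRingEnd ℂ) cα = α := by rw [hcα, Complex.conj_conj]
  have hsub1 : ∀ a b : ℂ, (a + b) • (1:𝒜) - a • (1:𝒜) = b • 1 := by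
    intro a b; rw [← sub_smul, add_sub_cancel_left]
  -- the 2x2 gram matrix [[tR, α],[cα, 1]]
  have hM2 : MatPos (Matrix.of ![![((tR : ℝ) : ℂ) • (1:𝒜), α • 1], ![cα • 1, 1]]) := by
    have := gram2 (cα • (1:𝒜)) 1
    have e : Matrix.of ![![star (cα • (1:𝒜)) * (cα • 1), star (cα • (1:𝒜)) * 1],
        ![star (1:𝒜) * (cα • 1), star (1:𝒜) * (1:𝒜)]]
        = Matrix.of ![![((tR : ℝ) : ℂ) • (1:𝒜), α • 1], ![cα • 1, 1]] := by
      ext i j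
      fin_cases i <;> fin_cases j <;>
        simp [star_smul, Complex.star_def, smul_mul_assoc, mul_smul_comm, smul_smul,
          hmulconj, hmulconj', hconjca, Matrix.vecHead, Matrix.vecTail]
    rwa [e] at this
  -- lower bound : tR • 1 ≤ Φ (tR • 1)
  have hlow : ((tR : ℝ) : ℂ) • (1:ℬ) ≤ Φ (((tR : ℝ) : ℂ) • 1) := by
    have hD := pos2 _ hM2
    have hcor := corner_unit hD (x := α • (1:ℬ))
      (by simp [Matrix.map_apply, heq])
      (by simp [Matrix.map_apply, hΦca, star_smul, Complex.star_def]; exact hcα)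
      (by simp [Matrix.map_apply, hu])
    have e : (α • (1:ℬ)) * star (α • (1:ℬ)) = ((tR : ℝ) : ℂ) • 1 := by
      rw [star_smul, star_one, smul_mul_assoc, mul_smul_comm, one_mul, smul_smul,
        Complex.star_def, hmulconj]
    rw [e] at hcor
    simpa [Matrix.map_apply] using hcor
  -- step inequality
  have step : ∀ x : ℝ, 0 ≤ x →
      Φ (((x : ℝ) : ℂ) • 1) + ((tR : ℝ) : ℂ) • (1:ℬ) ≤ Φ (((x + tR : ℝ) : ℂ) • 1) := by
    intro x hx
    set M : Matrix (Fin 2) (Fin 2) 𝒜 :=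
      Matrix.of ![![((x + tR : ℝ) : ℂ) • 1, α • 1], ![cα • 1, 1]] with hMdef
    set N : Matrix (Fin 2) (Fin 2) 𝒜 :=
      Matrix.of ![![((x : ℝ) : ℂ) • 1, 0], ![0, 0]] with hNdef
    have hN : MatPos N := by
      have := gram2 (((Real.sqrt x : ℝ) : ℂ) • (1:𝒜)) 0
      have e : Matrix.of ![![star (((Real.sqrt x : ℝ) : ℂ) • (1:𝒜)) * (((Real.sqrt x : ℝ) : ℂ) • 1),
          star (((Real.sqrt x : ℝ) : ℂ) • (1:𝒜)) * 0],
          ![star (0:𝒜) * (((Real.sqrt x : ℝ) : ℂ) • 1), star (0:𝒜) * 0]] = N := by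
        ext i j
        fin_cases i <;> fin_cases j <;>
          simp [hNdef, star_smul, Complex.star_def, Complex.conj_ofReal, smul_mul_assoc,
            mul_smul_comm, smul_smul, ← Complex.ofReal_mul, Real.mul_self_sqrt hx,
            Matrix.vecHead, Matrix.vecTail]
      rwa [e] at this
    have hMN : MatPos (M - N) := by
      have e : M - N = Matrix.of ![![((tR : ℝ) : ℂ) • (1:𝒜), α • 1], ![cα • 1, 1]] := by
        ext i j
        fin_cases i <;> fin_cases j <;>
          simp [hMdef, hNdef, Matrix.sub_apply, Matrix.vecHead, Matrix.vecTail]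
        · rw [show (x:ℝ) • (1:𝒜) = ((x:ℝ):ℂ) • 1 from (algebraMap_smul ℂ x (1:𝒜)).symm,
            show (tR:ℝ) • (1:𝒜) = ((tR:ℝ):ℂ) • 1 from (algebraMap_smul ℂ tR (1:𝒜)).symm,
            ← sub_smul, add_sub_cancel_left]
      rw [e]; exact hM2
    have hD := hmon2 M N hN hMN
    have hcor := corner_unit hD (x := α • (1:ℬ))
      (by simp [Matrix.map_apply, Matrix.sub_apply, hMdef, hNdef, heq, h0])
      (by simp [Matrix.map_apply, Matrix.sub_apply, hMdef, hNdef, hΦca, h0, star_smul,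
        Complex.star_def]; exact hcα)
      (by simp [Matrix.map_apply, Matrix.sub_apply, hMdef, hNdef, hu, h0])
    have e : (α • (1:ℬ)) * star (α • (1:ℬ)) = ((tR : ℝ) : ℂ) • 1 := by
      rw [star_smul, star_one, smul_mul_assoc, mul_smul_comm, one_mul, smul_smul,
        Complex.star_def, hmulconj]
    rw [e] at hcor
    have hD00 : (M.map Φ - N.map Φ) 0 0 = Φ (((x + tR : ℝ) : ℂ) • 1) - Φ (((x : ℝ) : ℂ) • 1) := by
      simp [Matrix.map_apply, Matrix.sub_apply, hMdef, hNdef]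
    rw [hD00] at hcor
    simpa [add_comm] using (le_sub_iff_add_le).1 hcor
  -- grid bound
  have grid : ∀ k : ℕ, (k : ℝ) * tR ≤ 1 →
      Φ (((1 - (k : ℝ) * tR : ℝ) : ℂ) • 1) ≤ ((1 - (k : ℝ) * tR : ℝ) : ℂ) • (1:ℬ) := by
    intro k
    induction k with
    | zero =>
      intro _
      simp [hu]
    | succ k ih =>
      intro hk1
      have hk : (k : ℝ) * tR ≤ 1 := by
        push_cast at hk1
        nlinarith [htpos.le]
      have hx : 0 ≤ 1 - ((k : ℝ) + 1) * tR := by push_cast at hk1 ⊢; linarith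
      have hs := step (1 - ((k : ℝ) + 1) * tR) hx
      have harg : ((1 - ((k : ℝ) + 1) * tR + tR : ℝ) : ℂ) = ((1 - (k : ℝ) * tR : ℝ) : ℂ) := by
        push_cast; ring
      rw [harg] at hs
      have ih' := ih hk
      have hchain : Φ (((1 - ((k : ℝ) + 1) * tR : ℝ) : ℂ) • 1)
          ≤ ((1 - (k : ℝ) * tR : ℝ) : ℂ) • (1:ℬ) - ((tR : ℝ) : ℂ) • 1 :=
        (le_sub_iff_add_le).2 (le_trans hs ih')
      have harg2 : ((1 - (k : ℝ) * tR : ℝ) : ℂ) • (1:ℬ) - ((tR : ℝ) : ℂ) • 1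
          = ((1 - ((k : ℝ) + 1) * tR : ℝ) : ℂ) • 1 := by
        rw [← sub_smul, ← Complex.ofReal_sub]
        congr 2
        ring
      rw [harg2] at hchain
      have hcast : ((1 - ((k:ℕ) + 1 : ℕ) * tR : ℝ) : ℂ) = ((1 - ((k : ℝ) + 1) * tR : ℝ) : ℂ) := by
        push_cast; ring
      rw [hcast]
      exact hchain
  -- key : Φ (tR • 1) = tR • 1
  have key : Φ (((tR : ℝ) : ℂ) • 1) = ((tR : ℝ) : ℂ) • (1:ℬ) := by
    rcases eq_or_lt_of_le ht1 with ht1' | ht1'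
    · rw [ht1']; simpa using hu
    · -- upper bound via φ machinery
      set φR : ℝ → ℝ := fun s => ‖Φ ((s : ℂ) • (1:𝒜))‖ with hφR
      have hφcont : Continuous φR := by
        rw [hφR]
        exact continuous_norm.comp (hcont.comp (Complex.continuous_ofReal.smul continuous_const))
      have hφ1 : φR 1 = 1 := by
        simp [hφR, hu]
      have hφnn : ∀ s, 0 ≤ φR s := fun s => norm_nonneg _
      have hφgm : ∀ u v : ℝ, 0 ≤ u → 0 ≤ v → φR (Real.sqrt (u * v)) ^ 2 ≤ φR u * φR v := by
        intro u v hu' hv'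
        have hg : MatPos (Matrix.of ![![((u : ℝ) : ℂ) • (1:𝒜), ((Real.sqrt (u*v) : ℝ) : ℂ) • 1],
            ![((Real.sqrt (u*v) : ℝ) : ℂ) • 1, ((v : ℝ) : ℂ) • 1]]) := by
          have := gram2 (((Real.sqrt u : ℝ) : ℂ) • (1:𝒜)) (((Real.sqrt v : ℝ) : ℂ) • (1:𝒜))
          have e : Matrix.of ![![star (((Real.sqrt u : ℝ):ℂ) • (1:𝒜)) * (((Real.sqrt u : ℝ):ℂ) • 1),
              star (((Real.sqrt u : ℝ):ℂ) • (1:𝒜)) * (((Real.sqrt v : ℝ):ℂ) • 1)],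
              ![star (((Real.sqrt v : ℝ):ℂ) • (1:𝒜)) * (((Real.sqrt u : ℝ):ℂ) • 1),
              star (((Real.sqrt v : ℝ):ℂ) • (1:𝒜)) * (((Real.sqrt v : ℝ):ℂ) • 1)]]
              = Matrix.of ![![((u : ℝ) : ℂ) • (1:𝒜), ((Real.sqrt (u*v) : ℝ) : ℂ) • 1],
              ![((Real.sqrt (u*v) : ℝ) : ℂ) • 1, ((v : ℝ) : ℂ) • 1]] := by
            ext i j
            fin_cases i <;> fin_cases j <;>
              simp [star_smul, Complex.star_def, Complex.conj_ofReal, smul_mul_assoc,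
                mul_smul_comm, smul_smul, ← Complex.ofReal_mul, Real.mul_self_sqrt hu',
                Real.mul_self_sqrt hv', Real.sqrt_mul hu',
                Real.sqrt_mul_self (Real.sqrt_nonneg u),
                mul_comm (Real.sqrt v) (Real.sqrt u),
                Matrix.vecHead, Matrix.vecTail]
          rwa [e] at this
        have hD := pos2 _ hg
        have hcn := corner_norm hD
        have e01 : ((Matrix.of ![![((u : ℝ) : ℂ) • (1:𝒜), ((Real.sqrt (u*v) : ℝ) : ℂ) • 1],
            ![((Real.sqrt (u*v) : ℝ) : ℂ) • 1, ((v : ℝ) : ℂ) • 1]]).map Φ) 0 1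
            = Φ (((Real.sqrt (u*v) : ℝ) : ℂ) • 1) := by simp [Matrix.map_apply]
        have e11 : ((Matrix.of ![![((u : ℝ) : ℂ) • (1:𝒜), ((Real.sqrt (u*v) : ℝ) : ℂ) • 1],
            ![((Real.sqrt (u*v) : ℝ) : ℂ) • 1, ((v : ℝ) : ℂ) • 1]]).map Φ) 1 1
            = Φ (((v : ℝ) : ℂ) • 1) := by simp [Matrix.map_apply]
        have e00 : ((Matrix.of ![![((u : ℝ) : ℂ) • (1:𝒜), ((Real.sqrt (u*v) : ℝ) : ℂ) • 1],
            ![((Real.sqrt (u*v) : ℝ) : ℂ) • 1, ((v : ℝ) : ℂ) • 1]]).map Φ) 0 0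
            = Φ (((u : ℝ) : ℂ) • 1) := by simp [Matrix.map_apply]
        rw [e01, e11, e00] at hcn
        calc φR (Real.sqrt (u*v)) ^ 2 ≤ φR v * φR u := hcn
          _ = φR u * φR v := mul_comm _ _
      -- φ at gridpoints
      have gridφ : ∀ k : ℕ, (k : ℝ) * tR ≤ 1 → φR (1 - (k : ℝ) * tR) ≤ 1 - (k : ℝ) * tR := by
        intro k hk
        have h1 : 0 ≤ 1 - (k : ℝ) * tR := by linarith
        exact norm_le_of_le_smul (snn _ h1) h1 (grid k hk)
      -- floor
      set K : ℕ := ⌊1 / tR⌋₊ with hK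
      have hK1 : (K : ℝ) * tR ≤ 1 := by
        have := Nat.floor_le (by positivity : (0:ℝ) ≤ 1 / tR)
        rw [← hK] at this
        calc (K : ℝ) * tR ≤ (1 / tR) * tR := by nlinarith [htpos]
          _ = 1 := by field_simp
      have hKlt : 1 < ((K : ℝ) + 1) * tR := by
        have := Nat.lt_floor_add_one (1 / tR)
        rw [← hK] at this
        have h2 : 1 / tR < (K : ℝ) + 1 := this
        calc 1 = (1 / tR) * tR := by field_simp
          _ < ((K : ℝ) + 1) * tR := by nlinarith [htpos]
      have hKpos : 1 ≤ K := by
        rw [hK]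
        apply Nat.le_floor
        rw [Nat.cast_one]
        rw [le_div_iff₀ htpos]
        linarith
      have hφt : φR tR ≤ tR := by
        rcases eq_or_lt_of_le (by linarith [hK1] : (0:ℝ) ≤ 1 - (K : ℝ) * tR) with hw | hw
        · -- 1 - K tR = 0, so tR = 1 - (K-1) tR is a gridpoint
          have hKm : ((K - 1 : ℕ) : ℝ) = (K : ℝ) - 1 := by
            rw [Nat.cast_sub hKpos]; simp
          have harg : 1 - ((K - 1 : ℕ) : ℝ) * tR = tR := by
            rw [hKm]; nlinarith [hw]
          have hk2 : ((K - 1 : ℕ) : ℝ) * tR ≤ 1 := by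
            rw [hKm]; nlinarith [htpos.le]
          have := gridφ (K - 1) hk2
          rwa [harg] at this
        · -- 0 < w₀ < tR
          set w₀ := 1 - (K : ℝ) * tR with hw₀
          have hwlt : w₀ < tR := by
            rw [hw₀]; nlinarith [hKlt]
          have hφw : φR w₀ ≤ w₀ := gridφ K hK1
          exact interp hφcont hφ1 hφnn hφgm hw hwlt ht1' hφw
      -- combine bounds
      have hup : Φ (((tR : ℝ) : ℂ) • 1) ≤ ((tR : ℝ) : ℂ) • (1:ℬ) := by
        have h1 := le_norm_smul_one (snn tR htpos.le)
        have h2 : ((‖Φ (((tR : ℝ) : ℂ) • (1:𝒜))‖ : ℝ) : ℂ) • (1:ℬ) ≤ ((tR : ℝ) : ℂ) • 1 := by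
          have h3 : (0:ℬ) ≤ ((tR : ℝ) : ℂ) • (1:ℬ) - ((‖Φ (((tR : ℝ) : ℂ) • (1:𝒜))‖ : ℝ) : ℂ) • 1 := by
            rw [← sub_smul, ← Complex.ofReal_sub]
            refine ofreal_smul_nonneg (by linarith [hφt]) ?_
            simpa using star_mul_self_nonneg (1:ℬ)
          exact sub_nonneg.1 h3
        exact le_trans h1 h2
      exact le_antisymm hup hlow
  -- final null-vector argument
  intro A
  set G : Matrix (Fin 3) (Fin 3) 𝒜 := Matrix.of ![![1, cα • 1, A],
      ![α • 1, ((tR : ℝ) : ℂ) • 1, α • A],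
      ![star A, cα • star A, star A * A]] with hG
  have hGpos : MatPos G := by
    have := gram3 (1:𝒜) (cα • 1) A
    have e : Matrix.of ![![star (1:𝒜) * 1, star (1:𝒜) * (cα • 1), star (1:𝒜) * A],
        ![star (cα • (1:𝒜)) * 1, star (cα • (1:𝒜)) * (cα • 1), star (cα • (1:𝒜)) * A],
        ![star A * 1, star A * (cα • 1), star A * A]] = G := by
      ext i j
      fin_cases i <;> fin_cases j <;>
        simp [hG, star_smul, Complex.star_def, smul_mul_assoc, mul_smul_comm, smul_smul,
          hmulconj, hmulconj', hconjca, Matrix.vecHead, Matrix.vecTail]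
    rwa [e] at this
  have hX := h3 G hGpos
  set v : Fin 3 → ℬ := ![cα • 1, -1, 0] with hv
  have hzero : ∑ i, ∑ j, star (v i) * (G.map Φ) i j * v j = 0 := by
    simp only [hv, hG, Fin.sum_univ_three, Matrix.map_apply, Matrix.of_apply,
      Matrix.cons_val', Matrix.cons_val_zero, Matrix.cons_val_one, Matrix.head_cons,
      Matrix.cons_val_two, Matrix.tail_cons, Matrix.head_fin_const, Matrix.empty_val',
      Matrix.cons_val_fin_one]
    rw [hu, heq, hΦca, key]
    simp only [star_neg, star_one, star_zero, star_smul, Complex.star_def, Complex.conj_conj,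
      mul_zero, zero_mul, mul_neg, neg_mul, mul_one, one_mul, add_zero, zero_add,
      smul_mul_assoc, mul_smul_comm, smul_smul, neg_neg, smul_neg, smul_zero,
      hconjca, hmulconj, hmulconj']
    abel
  have hnull := matpos_null hX hzero ![0, 0, 1]
  simp only [hv, hG, Fin.sum_univ_three, Matrix.map_apply, Matrix.of_apply,
    Matrix.cons_val', Matrix.cons_val_zero, Matrix.cons_val_one, Matrix.head_cons,
    Matrix.cons_val_two, Matrix.tail_cons, Matrix.head_fin_const, Matrix.empty_val',
    Matrix.cons_val_fin_one] at hnull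
  simp only [star_neg, star_one, star_zero, star_smul, Complex.star_def, Complex.conj_conj,
    mul_zero, zero_mul, mul_neg, neg_mul, mul_one, one_mul, add_zero, zero_add,
    smul_mul_assoc, neg_neg] at hnull
  -- hnull : α • Φ A + -(Φ (α • A)) = 0  (hopefully)
  rw [hconjca] at hnull
  have h9 : α • Φ A - Φ (α • A) = 0 := by rw [sub_eq_add_neg]; exact hnull
  exact (sub_eq_zero.1 h9).symm

end Core

end Stmt18

theorem stmt_18 {𝒜 ℬ : Type*} [CStarAlgebra 𝒜] [CStarAlgebra ℬ]
    [PartialOrder 𝒜] [StarOrderedRing 𝒜] [PartialOrder ℬ] [StarOrderedRing ℬ] (Φ : 𝒜 → ℬ)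
    (hcont : Continuous Φ) (hu : Φ 1 = 1) (h0 : Φ 0 = 0)
    (h3 : ∀ M : Matrix (Fin 3) (Fin 3) 𝒜, MatPos M → MatPos (M.map Φ))
    (hmon2 : ∀ M N : Matrix (Fin 2) (Fin 2) 𝒜, MatPos N → MatPos (M - N) →
      MatPos (M.map Φ - N.map Φ))
    (α : ℂ) (hα : ‖α‖ ≤ 1 ∨ (α.im = 0 ∧ 0 ≤ α.re))
    (heq : Φ (α • (1 : 𝒜)) = α • (1 : ℬ)) :
    ∀ A : 𝒜, Φ (α • A) = α • Φ A := by
  rcases hα with hle | ⟨him, hre⟩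
  · exact Stmt18.core Φ hcont hu h0 h3 hmon2 α hle heq
  · have hα' : α = ((α.re : ℝ) : ℂ) := by
      apply Complex.ext <;> simp [him]
    set r := α.re with hr
    by_cases hr1 : r ≤ 1
    · have hle : ‖α‖ ≤ 1 := by
        rw [hα', Complex.norm_real, Real.norm_eq_abs, _root_.abs_of_nonneg hre]
        exact hr1
      exact Stmt18.core Φ hcont hu h0 h3 hmon2 α hle heq
    · push_neg at hr1
      have hrpos : 0 < r := by linarith
      have hrne : (r : ℂ) ≠ 0 := by
        simpa using ne_of_gt hrpos
      set Ψ : 𝒜 → ℬ := fun A => ((r : ℂ))⁻¹ • Φ (((r : ℝ) : ℂ) • A) with hΨ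
      have hmapΨ : ∀ {n : ℕ} (M : Matrix (Fin n) (Fin n) 𝒜),
          M.map Ψ = ((r : ℂ))⁻¹ • ((((r : ℝ) : ℂ)) • M).map Φ := by
        intro n M
        ext i j
        simp [hΨ, Matrix.map_apply, Matrix.smul_apply]
      have hcontΨ : Continuous Ψ := by
        rw [hΨ]
        fun_prop
      have huΨ : Ψ 1 = 1 := by
        rw [hΨ]
        simp only []
        rw [show (((r : ℝ) : ℂ)) • (1:𝒜) = α • 1 by rw [← hα']]
        rw [heq, hα', smul_smul]
        rw [inv_mul_cancel₀ hrne, one_smul]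
      have h0Ψ : Ψ 0 = 0 := by
        simp [hΨ, h0]
      have h3Ψ : ∀ M : Matrix (Fin 3) (Fin 3) 𝒜, MatPos M → MatPos (M.map Ψ) := by
        intro M hM
        rw [hmapΨ]
        have h1 := h3 _ (Stmt18.matpos_smul hM hrpos.le)
        rw [show ((r : ℂ))⁻¹ = (((r⁻¹ : ℝ) : ℂ)) by push_cast; ring]
        exact Stmt18.matpos_smul h1 (by positivity)
      have hmon2Ψ : ∀ M N : Matrix (Fin 2) (Fin 2) 𝒜, MatPos N → MatPos (M - N) →
          MatPos (M.map Ψ - N.map Ψ) := by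
        intro M N hN hMN
        rw [hmapΨ, hmapΨ, ← smul_sub]
        have h1 := hmon2 ((((r : ℝ) : ℂ)) • M) ((((r : ℝ) : ℂ)) • N)
          (Stmt18.matpos_smul hN hrpos.le)
          (by rw [← smul_sub]; exact Stmt18.matpos_smul hMN hrpos.le)
        rw [show ((r : ℂ))⁻¹ = (((r⁻¹ : ℝ) : ℂ)) by push_cast; ring]
        exact Stmt18.matpos_smul h1 (by positivity)
      set β : ℂ := ((r⁻¹ : ℝ) : ℂ) with hβ
      have hβle : ‖β‖ ≤ 1 := by
        rw [hβ, Complex.norm_real, Real.norm_eq_abs, _root_.abs_of_nonneg (by positivity)]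
        rw [inv_le_one_iff₀]
        right; linarith
      have heqΨ : Ψ (β • 1) = β • 1 := by
        rw [hΨ]
        simp only []
        rw [smul_smul, hβ,
          show (((r : ℝ) : ℂ)) * ((r⁻¹ : ℝ) : ℂ) = 1 by push_cast; field_simp,
          one_smul, hu, Complex.ofReal_inv]
      have hcoreΨ := Stmt18.core Ψ hcontΨ huΨ h0Ψ h3Ψ hmon2Ψ β hβle heqΨ
      intro A
      have hA := hcoreΨ A
      rw [hΨ] at hA
      simp only [] at hA
      rw [smul_smul, hβ] at hA
      rw [show (((r : ℝ) : ℂ)) * ((r⁻¹ : ℝ) : ℂ) = 1 by push_cast; field_simp] at hA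
      rw [one_smul] at hA
      -- hA : (r:ℂ)⁻¹ • Φ A = (r⁻¹:ℂ) • ((r:ℂ)⁻¹ • Φ ((r:ℂ) • A))
      have hgoal : Φ (((r : ℝ) : ℂ) • A) = ((r : ℝ) : ℂ) • Φ A := by
        have h2 := congrArg (fun y => (((r : ℝ) : ℂ) * ((r : ℝ) : ℂ)) • y) hA
        simp only [smul_smul] at h2
        rw [show (((r : ℝ) : ℂ)) * ((r : ℝ) : ℂ) * ((r : ℂ))⁻¹ = ((r : ℝ) : ℂ) by
          field_simp] at h2
        rw [show (((r : ℝ) : ℂ)) * ((r : ℝ) : ℂ) * (((r⁻¹ : ℝ) : ℂ) * ((r : ℂ))⁻¹) = 1 by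
          push_cast; field_simp] at h2
        rw [one_smul] at h2
        exact h2.symm
      rw [hα']
      exact hgoal
end
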